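/- arXiv:2006.04687 — 4 statements merged into one kernel-verified Lean document; each statement's English description precedes it below -/
import Mathlib

section
/- (i) For any set A ⊆ L⁰₊(μ), the polar A° is a closed, convex, solid subset of L⁰₊(μ). (ii) The bipolar A°° := {g ∈ L⁰₊(μ) : ⟨g,h⟩ ≤ 1 for all h ∈ A°} is the smallest closed, convex, solid subset of L⁰₊(μ) containing A. -/
open MeasureTheory Filter Set Topology
open scoped ENNReal Pointwise

set_option maxHeartbeats 1000000
set_option synthInstance.maxHeartbeats 1000000

noncomputable section

variable {Ω : Type*} [MeasurableSpace Ω]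

/-- `L⁰₊(μ)`: the nonnegative (μ-a.e.) measurable functions on `Ω`,
to be thought of as identified up to μ-a.e. equality. -/
def L0plus (μ : Measure Ω) : Set (Ω → ℝ) :=
  {g | AEMeasurable g μ ∧ 0 ≤ᵐ[μ] g}

/-- The pairing `⟨g,h⟩ = ∫_Ω g·h dμ`, valued in `[0,∞]`. -/
def muPairing (μ : Measure Ω) (g h : Ω → ℝ) : ℝ≥0∞ :=
  ∫⁻ ω, ENNReal.ofReal (g ω * h ω) ∂μ

/-- The polar `A° = {h ∈ L⁰₊(μ) : ⟨g,h⟩ ≤ 1 for all g ∈ A}` of a set `A ⊆ L⁰₊(μ)`. -/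
def muPolar (μ : Measure Ω) (A : Set (Ω → ℝ)) : Set (Ω → ℝ) :=
  {h | h ∈ L0plus μ ∧ ∀ g ∈ A, muPairing μ g h ≤ 1}

/-- A subset of `L⁰₊(μ)` is solid if it contains every element of `L⁰₊(μ)`
dominated μ-a.e. by one of its members. -/
def SolidIn (μ : Measure Ω) (A : Set (Ω → ℝ)) : Prop :=
  ∀ f ∈ A, ∀ g ∈ L0plus μ, g ≤ᵐ[μ] f → g ∈ A

/-- A subset of `L⁰₊(μ)` is closed with respect to convergence in measure `μ`. -/
def ClosedInMeasure (μ : Measure Ω) (A : Set (Ω → ℝ)) : Prop :=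
  ∀ (f : ℕ → Ω → ℝ) (g : Ω → ℝ), (∀ n, f n ∈ A) → g ∈ L0plus μ →
    TendstoInMeasure μ f atTop g → g ∈ A

variable {μ : Measure Ω}

lemma muPairing_comm (μ : Measure Ω) (g h : Ω → ℝ) :
    muPairing μ g h = muPairing μ h g := by
  unfold muPairing; simp_rw [mul_comm]

lemma muPairing_mono_right (μ : Measure Ω) {g h₁ h₂ : Ω → ℝ} (hg : 0 ≤ᵐ[μ] g)
    (h12 : h₁ ≤ᵐ[μ] h₂) : muPairing μ g h₁ ≤ muPairing μ g h₂ := by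
  refine lintegral_mono_ae ?_
  filter_upwards [hg, h12] with ω h1 h2
  exact ENNReal.ofReal_le_ofReal (mul_le_mul_of_nonneg_left h2 h1)

lemma muPolar_subset (μ : Measure Ω) (A : Set (Ω → ℝ)) : muPolar μ A ⊆ L0plus μ :=
  fun _ hh => hh.1

lemma muPolar_solid (μ : Measure Ω) (A : Set (Ω → ℝ)) (hA : A ⊆ L0plus μ) :
    SolidIn μ (muPolar μ A) := by
  intro f hf g hg hgf
  exact ⟨hg, fun k hk => le_trans (muPairing_mono_right μ (hA hk).2 hgf) (hf.2 k hk)⟩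

lemma muPolar_convex (μ : Measure Ω) (A : Set (Ω → ℝ)) (hA : A ⊆ L0plus μ) :
    Convex ℝ (muPolar μ A) := by
  intro h₁ hh₁ h₂ hh₂ a b ha hb hab
  have hmem : a • h₁ + b • h₂ ∈ L0plus μ := by
    refine ⟨(hh₁.1.1.const_smul a).add (hh₂.1.1.const_smul b), ?_⟩
    filter_upwards [hh₁.1.2, hh₂.1.2] with ω h1 h2
    have : 0 ≤ a * h₁ ω + b * h₂ ω := add_nonneg (mul_nonneg ha h1) (mul_nonneg hb h2)
    simpa using this
  refine ⟨hmem, fun g hg => ?_⟩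
  have key : muPairing μ g (a • h₁ + b • h₂)
      = ENNReal.ofReal a * muPairing μ g h₁ + ENNReal.ofReal b * muPairing μ g h₂ := by
    unfold muPairing
    rw [← lintegral_const_mul' _ _ ENNReal.ofReal_ne_top,
      ← lintegral_const_mul' _ _ ENNReal.ofReal_ne_top, ← lintegral_add_left']
    · refine lintegral_congr_ae ?_
      filter_upwards [(hA hg).2, hh₁.1.2, hh₂.1.2] with ω hgω h1 h2
      have e1 : g ω * (a • h₁ + b • h₂) ω = a * (g ω * h₁ ω) + b * (g ω * h₂ ω) := by
        simp [Pi.add_apply, Pi.smul_apply, smul_eq_mul]; ring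
      rw [e1, ENNReal.ofReal_add (mul_nonneg ha (mul_nonneg hgω h1)) (mul_nonneg hb (mul_nonneg hgω h2)),
        ENNReal.ofReal_mul ha, ENNReal.ofReal_mul hb]
    · exact (ENNReal.continuous_ofReal.measurable.comp_aemeasurable
        ((hA hg).1.mul hh₁.1.1)).const_mul _
  rw [key]
  calc ENNReal.ofReal a * muPairing μ g h₁ + ENNReal.ofReal b * muPairing μ g h₂
      ≤ ENNReal.ofReal a * 1 + ENNReal.ofReal b * 1 := by
        gcongr
        exacts [hh₁.2 g hg, hh₂.2 g hg]
    _ = ENNReal.ofReal (a + b) := by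
        rw [mul_one, mul_one, ENNReal.ofReal_add ha hb]
    _ = 1 := by rw [hab]; simp

lemma muPolar_closed (μ : Measure Ω) [IsFiniteMeasure μ] (A : Set (Ω → ℝ))
    (hA : A ⊆ L0plus μ) : ClosedInMeasure μ (muPolar μ A) := by
  intro f h hf hh htend
  refine ⟨hh, fun g hg => ?_⟩
  obtain ⟨ns, -, hns⟩ := htend.exists_seq_tendsto_ae
  have hle : muPairing μ g h ≤ Filter.liminf (fun i => muPairing μ g (f (ns i))) atTop := by
    have : muPairing μ g h
        = ∫⁻ ω, Filter.liminf (fun i => ENNReal.ofReal (g ω * f (ns i) ω)) atTop ∂μ := by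
      refine lintegral_congr_ae ?_
      filter_upwards [hns] with ω hω
      have : Tendsto (fun i => ENNReal.ofReal (g ω * f (ns i) ω)) atTop
          (𝓝 (ENNReal.ofReal (g ω * h ω))) := by
        exact (ENNReal.continuous_ofReal.tendsto _).comp
          ((continuous_const.mul continuous_id).continuousAt.tendsto.comp hω)
      exact (this.liminf_eq).symm
    rw [this]
    exact lintegral_liminf_le' (fun i =>
      (ENNReal.continuous_ofReal.measurable.comp_aemeasurable
        ((hA hg).1.mul (hf (ns i)).1.1)))
  refine hle.trans ?_
  refine liminf_le_of_frequently_le' (Frequently.of_forall fun i => ?_)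
  exact (hf (ns i)).2 g hg

lemma muPolar_antitone (μ : Measure Ω) {A B : Set (Ω → ℝ)} (hAB : A ⊆ B) :
    muPolar μ B ⊆ muPolar μ A :=
  fun h hh => ⟨hh.1, fun g hg => hh.2 g (hAB hg)⟩

lemma subset_biPolar (μ : Measure Ω) (A : Set (Ω → ℝ)) (hA : A ⊆ L0plus μ) :
    A ⊆ muPolar μ (muPolar μ A) := by
  intro g hg
  refine ⟨hA hg, fun h hh => ?_⟩
  rw [muPairing_comm]
  exact hh.2 g hg

lemma isup_trunc (a c : ℝ) (hc : 0 ≤ c) :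
    ⨆ n : ℕ, ENNReal.ofReal (min a n * c) = ENNReal.ofReal (a * c) := by
  obtain ⟨N, hN⟩ := exists_nat_ge a
  refine le_antisymm (iSup_le fun n => ENNReal.ofReal_le_ofReal
    (mul_le_mul_of_nonneg_right (min_le_left _ _) hc)) ?_
  exact le_iSup_of_le N (by rw [min_eq_left hN])

lemma mem_of_ae_eq {B : Set (Ω → ℝ)} (hsol : SolidIn μ B) {f f' : Ω → ℝ}
    (hf : f ∈ B) (hmeas : AEMeasurable f' μ) (heq : f' =ᵐ[μ] f) (hnn : 0 ≤ᵐ[μ] f) :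
    f' ∈ B :=
  hsol f hf f' ⟨hmeas, by filter_upwards [heq, hnn] with ω h1 h2; rw [h1]; exact h2⟩ heq.le

lemma exists_separating (μ : Measure Ω) [IsFiniteMeasure μ] {B : Set (Ω → ℝ)}
    (hB : B ⊆ L0plus μ) (hcl : ClosedInMeasure μ B) (hcx : Convex ℝ B) (hsol : SolidIn μ B)
    (h0 : (0 : Ω → ℝ) ∈ B) {g : Ω → ℝ} (hg : g ∈ L0plus μ) (hgB : g ∉ B) :
    ∃ h ∈ muPolar μ B, 1 < muPairing μ g h := by
  classical
  -- truncations of members of B stay in B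
  have htruncB : ∀ f ∈ B, ∀ n : ℕ, (fun ω => min (f ω) n) ∈ B := by
    intro f hf n
    refine hsol f hf _ ⟨(hB hf).1.min aemeasurable_const, ?_⟩
      (Eventually.of_forall fun ω => min_le_left _ _)
    filter_upwards [(hB hf).2] with ω hω
    exact le_min hω (Nat.cast_nonneg n)
  -- truncations MemLp 2
  have htrunc2 : ∀ f : Ω → ℝ, AEMeasurable f μ → 0 ≤ᵐ[μ] f → ∀ n : ℕ,
      MemLp (fun ω => min (f ω) n) 2 μ := by
    intro f hf hnn n
    refine MemLp.of_bound ((hf.min aemeasurable_const).aestronglyMeasurable) n ?_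
    filter_upwards [hnn] with ω hω
    rw [Real.norm_eq_abs, abs_of_nonneg (le_min hω (Nat.cast_nonneg n))]
    exact min_le_right _ _
  -- some truncation of g is not in B
  have hn₀ : ∃ n₀ : ℕ, (fun ω => min (g ω) n₀) ∉ B := by
    by_contra hcon
    push_neg at hcon
    refine hgB (hcl (fun n ω => min (g ω) n) g hcon hg ?_)
    refine tendstoInMeasure_of_tendsto_ae
      (fun n => (hg.1.min aemeasurable_const).aestronglyMeasurable) ?_
    refine Eventually.of_forall fun ω => ?_
    obtain ⟨N, hN⟩ := exists_nat_ge (g ω)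
    refine tendsto_atTop_of_eventually_const (i₀ := N) fun n hn => ?_
    exact min_eq_left (hN.trans (Nat.cast_le.2 hn))
  obtain ⟨n₀, hn₀⟩ := hn₀
  set gt : Ω → ℝ := fun ω => min (g ω) n₀ with hgt
  have hgt2 : MemLp gt 2 μ := htrunc2 g hg.1 hg.2 n₀
  have hgtnn : 0 ≤ᵐ[μ] gt := by
    filter_upwards [hg.2] with ω hω; exact le_min hω (Nat.cast_nonneg n₀)
  -- the L² picture
  set S : Set (Lp ℝ 2 μ) := {x | (x : Ω → ℝ) ∈ B} with hS
  have hmemS : ∀ (x : Lp ℝ 2 μ) (f : Ω → ℝ), f ∈ B → (x : Ω → ℝ) =ᵐ[μ] f → x ∈ S := by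
    intro x f hf heq
    exact mem_of_ae_eq hsol hf (Lp.aestronglyMeasurable x).aemeasurable heq (hB hf).2
  have hScx : Convex ℝ S := by
    intro x hx y hy a b ha hb hab
    refine hmemS _ (a • (x : Ω → ℝ) + b • (y : Ω → ℝ)) (hcx hx hy ha hb hab) ?_
    filter_upwards [Lp.coeFn_add (a • x) (b • y), Lp.coeFn_smul a x, Lp.coeFn_smul b y]
      with ω h1 h2 h3
    simp only [Pi.add_apply, Pi.smul_apply] at h1 h2 h3 ⊢
    rw [h1, h2, h3]
  set xg : Lp ℝ 2 μ := hgt2.toLp gt with hxg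
  have hxgco : (xg : Ω → ℝ) =ᵐ[μ] gt := MemLp.coeFn_toLp hgt2
  have hxgT : xg ∉ closure S := by
    intro hmem'
    obtain ⟨x, hxS, hxtend⟩ := mem_closure_iff_seq_limit.1 hmem'
    have htm : TendstoInMeasure μ (fun k => ((x k : Ω → ℝ))) atTop (xg : Ω → ℝ) :=
      tendstoInMeasure_of_tendsto_Lp hxtend
    have hxgmem : (xg : Ω → ℝ) ∈ B := by
      refine hcl _ _ (fun k => hxS k) ⟨(Lp.aestronglyMeasurable xg).aemeasurable, ?_⟩ htm
      filter_upwards [hxgco, hgtnn] with ω h1 h2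
      rw [h1]; exact h2
    refine hn₀ (mem_of_ae_eq hsol hxgmem (hg.1.min aemeasurable_const) hxgco.symm ?_)
    filter_upwards [hxgco, hgtnn] with ω h1 h2
    rw [h1]; exact h2
  -- separation by a continuous linear functional
  obtain ⟨φ, u, hφ, hu⟩ := geometric_hahn_banach_closed_point hScx.closure isClosed_closure hxgT
  have h0S : (0 : Lp ℝ 2 μ) ∈ S := by
    refine hmemS 0 0 h0 ?_
    exact Lp.coeFn_zero ℝ 2 μ
  have hupos : (0:ℝ) < u := by
    have := hφ 0 (subset_closure h0S)
    simpa using this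
  -- represent the functional by an L² function
  set z : Lp ℝ 2 μ := (InnerProductSpace.toDual ℝ (Lp ℝ 2 μ)).symm φ with hz
  have hrep : ∀ x : Lp ℝ 2 μ, φ x = ∫ ω, (z : Ω → ℝ) ω * (x : Ω → ℝ) ω ∂μ := by
    intro x
    rw [← InnerProductSpace.toDual_symm_apply (𝕜 := ℝ) (y := φ) (x := x), ← hz,
      L2.inner_def]
    simp [RCLike.inner_apply, mul_comm]
  -- measurable representative and its positive part
  set ζ : Ω → ℝ := (Lp.aestronglyMeasurable z).mk _ with hζ
  have hζm : StronglyMeasurable ζ := (Lp.aestronglyMeasurable z).stronglyMeasurable_mk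
  have hζeq : (z : Ω → ℝ) =ᵐ[μ] ζ := (Lp.aestronglyMeasurable z).ae_eq_mk
  have hζint : Integrable ζ μ := by
    have h2 : MemLp (z : Ω → ℝ) 2 μ := Lp.memLp z
    have h1 : MemLp (z : Ω → ℝ) 1 μ := h2.mono_exponent (by norm_num)
    exact (memLp_one_iff_integrable.1 h1).congr hζeq
  set ζp : Ω → ℝ := fun ω => max (ζ ω) 0 with hζp
  have hζpm : Measurable ζp := hζm.measurable.max measurable_const
  have hζpint : Integrable ζp μ := hζint.pos_part
  have hζpnn : ∀ ω, 0 ≤ ζp ω := fun ω => le_max_right _ _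
  -- key estimate: truncations of members of B pair below u with ζp
  have hkey : ∀ f ∈ B, ∀ n : ℕ, ∫ ω, min (f ω) n * ζp ω ∂μ < u := by
    intro f hf n
    set P : Set Ω := {ω | 0 < ζ ω} with hP
    have hPm : MeasurableSet P := measurableSet_lt measurable_const hζm.measurable
    set fP : Ω → ℝ := P.indicator (fun ω => min (f ω) n) with hfP
    have hfPmeas : AEMeasurable fP μ := ((hB hf).1.min aemeasurable_const).indicator hPm
    have hfPB : fP ∈ B := by
      refine hsol f hf fP ⟨hfPmeas, ?_⟩ ?_
      · filter_upwards [(hB hf).2] with ω hω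
        by_cases hωP : ω ∈ P
        · rw [hfP, Set.indicator_of_mem hωP]
          exact le_min hω (Nat.cast_nonneg n)
        · rw [hfP, Set.indicator_of_notMem hωP]
          exact le_rfl
      · filter_upwards [(hB hf).2] with ω hω
        by_cases hωP : ω ∈ P
        · rw [hfP, Set.indicator_of_mem hωP]
          exact min_le_left _ _
        · rw [hfP, Set.indicator_of_notMem hωP]
          exact hω
    have hfP2 : MemLp fP 2 μ := by
      refine MemLp.of_bound hfPmeas.aestronglyMeasurable n ?_
      filter_upwards [(hB hf).2] with ω hω
      by_cases hωP : ω ∈ P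
      · rw [hfP, Set.indicator_of_mem hωP, Real.norm_eq_abs,
          abs_of_nonneg (le_min hω (Nat.cast_nonneg n))]
        exact min_le_right _ _
      · rw [hfP, Set.indicator_of_notMem hωP]
        simpa using Nat.cast_nonneg n
    have hxf : hfP2.toLp fP ∈ S := hmemS _ fP hfPB (MemLp.coeFn_toLp hfP2)
    have hlt : φ (hfP2.toLp fP) < u := hφ _ (subset_closure hxf)
    rw [hrep] at hlt
    have heqi : ∫ ω, (z:Ω→ℝ) ω * (hfP2.toLp fP : Ω → ℝ) ω ∂μ
        = ∫ ω, min (f ω) n * ζp ω ∂μ := by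
      refine integral_congr_ae ?_
      filter_upwards [hζeq, MemLp.coeFn_toLp hfP2] with ω h1 h2
      rw [h1, h2, hfP]
      by_cases hωP : ω ∈ P
      · rw [Set.indicator_of_mem hωP]
        have hpos : (0:ℝ) < ζ ω := hωP
        rw [show ζp ω = ζ ω from max_eq_left hpos.le]
        ring
      · rw [Set.indicator_of_notMem hωP]
        have hle : ζ ω ≤ 0 := not_lt.1 hωP
        rw [show ζp ω = 0 from max_eq_right hle]
        ring
    rwa [heqi] at hlt
  -- the value on the truncation of g exceeds u
  have hgtmeas : AEStronglyMeasurable gt μ := (hg.1.min aemeasurable_const).aestronglyMeasurable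
  have hgtbd : ∀ᵐ ω ∂μ, ‖gt ω‖ ≤ (n₀:ℝ) := by
    filter_upwards [hg.2] with ω hω
    rw [Real.norm_eq_abs, abs_of_nonneg (le_min hω (Nat.cast_nonneg n₀))]
    exact min_le_right _ _
  have hint1 : Integrable (fun ω => gt ω * ζ ω) μ := hζint.bdd_mul hgtmeas hgtbd
  have hint2 : Integrable (fun ω => gt ω * ζp ω) μ := hζpint.bdd_mul hgtmeas hgtbd
  have hβ : u < ∫ ω, gt ω * ζp ω ∂μ := by
    refine lt_of_lt_of_le ?_ (integral_mono_ae hint1 hint2 ?_)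
    · calc u < φ xg := hu
        _ = ∫ ω, (z:Ω→ℝ) ω * (xg:Ω→ℝ) ω ∂μ := hrep xg
        _ = ∫ ω, gt ω * ζ ω ∂μ := integral_congr_ae (by
            filter_upwards [hζeq, hxgco] with ω h1 h2
            rw [h1, h2, mul_comm])
    · filter_upwards [hgtnn] with ω hω
      exact mul_le_mul_of_nonneg_left (le_max_left _ _) hω
  -- the separating element of the polar
  set h : Ω → ℝ := fun ω => u⁻¹ * ζp ω with hh
  have hhnn : ∀ ω, 0 ≤ h ω := fun ω => mul_nonneg (inv_nonneg.2 hupos.le) (hζpnn ω)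
  have hhL0 : h ∈ L0plus μ :=
    ⟨(hζpm.const_mul _).aemeasurable, Eventually.of_forall hhnn⟩
  have hζpintc : Integrable (fun ω => u⁻¹ * ζp ω) μ := hζpint.const_mul _
  refine ⟨h, ⟨hhL0, ?_⟩, ?_⟩
  · intro f hfB
    have hfnn := (hB hfB).2
    have hkey2 : muPairing μ f h
        = ⨆ n : ℕ, ∫⁻ ω, ENNReal.ofReal (min (f ω) n * h ω) ∂μ := by
      rw [muPairing, ← lintegral_iSup']
      · exact lintegral_congr fun ω => (isup_trunc (f ω) (h ω) (hhnn ω)).symm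
      · intro n
        exact ENNReal.measurable_ofReal.comp_aemeasurable
          (((hB hfB).1.min aemeasurable_const).mul (hζpm.const_mul _).aemeasurable)
      · refine Eventually.of_forall fun ω => ?_
        intro a b hab
        exact ENNReal.ofReal_le_ofReal (mul_le_mul_of_nonneg_right
          (min_le_min le_rfl (Nat.cast_le.2 hab)) (hhnn ω))
    rw [hkey2]
    refine iSup_le fun n => ?_
    have hintn : Integrable (fun ω => min (f ω) n * h ω) μ := by
      refine hζpintc.bdd_mul (c := (n:ℝ)) ((hB hfB).1.min aemeasurable_const).aestronglyMeasurable ?_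
      filter_upwards [hfnn] with ω hω
      rw [Real.norm_eq_abs, abs_of_nonneg (le_min hω (Nat.cast_nonneg n))]
      exact min_le_right _ _
    have hnnn : 0 ≤ᵐ[μ] fun ω => min (f ω) n * h ω := by
      filter_upwards [hfnn] with ω hω
      exact mul_nonneg (le_min hω (Nat.cast_nonneg n)) (hhnn ω)
    rw [← ofReal_integral_eq_lintegral_ofReal hintn hnnn]
    refine ENNReal.ofReal_le_one.2 ?_
    have hrr : ∫ ω, min (f ω) n * h ω ∂μ = u⁻¹ * ∫ ω, min (f ω) n * ζp ω ∂μ := by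
      rw [← integral_const_mul]
      exact integral_congr_ae (Eventually.of_forall fun ω => by rw [hh]; ring)
    rw [hrr]
    calc u⁻¹ * ∫ ω, min (f ω) n * ζp ω ∂μ ≤ u⁻¹ * u :=
          mul_le_mul_of_nonneg_left (hkey f hfB n).le (inv_nonneg.2 hupos.le)
      _ = 1 := inv_mul_cancel₀ hupos.ne'
  · have hmono : muPairing μ gt h ≤ muPairing μ g h := by
      rw [muPairing_comm μ gt h, muPairing_comm μ g h]
      exact muPairing_mono_right μ (Eventually.of_forall hhnn)
        (Eventually.of_forall fun ω => min_le_left _ _)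
    refine lt_of_lt_of_le ?_ hmono
    have hintgt : Integrable (fun ω => gt ω * h ω) μ := by
      have : (fun ω => gt ω * h ω) = fun ω => u⁻¹ * (gt ω * ζp ω) := by
        funext ω; rw [hh]; ring
      rw [this]
      exact hint2.const_mul _
    have hnngt : 0 ≤ᵐ[μ] fun ω => gt ω * h ω := by
      filter_upwards [hgtnn] with ω hω
      exact mul_nonneg hω (hhnn ω)
    rw [muPairing, ← ofReal_integral_eq_lintegral_ofReal hintgt hnngt]
    have hrr : ∫ ω, gt ω * h ω ∂μ = u⁻¹ * ∫ ω, gt ω * ζp ω ∂μ := by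
      rw [← integral_const_mul]
      exact integral_congr_ae (Eventually.of_forall fun ω => by rw [hh]; ring)
    rw [hrr, show (1:ℝ≥0∞) = ENNReal.ofReal 1 by simp]
    rw [ENNReal.ofReal_lt_ofReal_iff]
    · rw [← div_eq_inv_mul, lt_div_iff₀ hupos, one_mul]
      exact hβ
    · exact mul_pos (inv_pos.2 hupos) (hupos.trans hβ)


/-- **Bipolar theorem (Brannath–Schachermayer).**
(i) The polar `A°` of a set `A ⊆ L⁰₊(μ)` is a closed, convex, solid subset of `L⁰₊(μ)`.
(ii) The bipolar `A°° = (A°)°` is the smallest closed, convex, solid subset of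
`L⁰₊(μ)` containing `A`. -/
theorem bipolar_theorem (μ : Measure Ω) [IsFiniteMeasure μ]
    (A : Set (Ω → ℝ)) (hA : A ⊆ L0plus μ) (hAne : A.Nonempty) :
    (muPolar μ A ⊆ L0plus μ ∧ ClosedInMeasure μ (muPolar μ A) ∧
      Convex ℝ (muPolar μ A) ∧ SolidIn μ (muPolar μ A)) ∧
    (A ⊆ muPolar μ (muPolar μ A) ∧
      ClosedInMeasure μ (muPolar μ (muPolar μ A)) ∧
      Convex ℝ (muPolar μ (muPolar μ A)) ∧
      SolidIn μ (muPolar μ (muPolar μ A)) ∧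
      ∀ B ⊆ L0plus μ, A ⊆ B → ClosedInMeasure μ B → Convex ℝ B → SolidIn μ B →
        muPolar μ (muPolar μ A) ⊆ B) := by
  refine ⟨⟨muPolar_subset μ A, muPolar_closed μ A hA, muPolar_convex μ A hA,
      muPolar_solid μ A hA⟩,
    subset_biPolar μ A hA,
    muPolar_closed μ _ (muPolar_subset μ A),
    muPolar_convex μ _ (muPolar_subset μ A),
    muPolar_solid μ _ (muPolar_subset μ A), ?_⟩
  intro B hB hAB hclB hcxB hsolB g hgAA
  by_contra hgB
  obtain ⟨f₀, hf₀⟩ := hAne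
  have h0B : (0 : Ω → ℝ) ∈ B :=
    hsolB f₀ (hAB hf₀) 0 ⟨aemeasurable_const, Eventually.of_forall fun ω => le_rfl⟩
      (hB (hAB hf₀)).2
  obtain ⟨h, hpol, hgt⟩ := exists_separating μ hB hclB hcxB hsolB h0B hgAA.1 hgB
  have hhA : h ∈ muPolar μ A := muPolar_antitone μ hAB hpol
  have hle : muPairing μ h g ≤ 1 := hgAA.2 h hhA
  rw [muPairing_comm] at hle
  exact absurd hle (not_le.2 hgt)
end
end

section
/- For every sequence (g̃ⁿ)_{n∈ℕ} in C there exists a sequence (gⁿ)_{n∈ℕ}, where each gⁿ is a finite convex combination of g̃ⁿ, g̃ⁿ⁺¹, …, such that (gⁿ) converges μ-a.e. to an element g ∈ C; in particular g is μ-a.e. finite. -/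
open MeasureTheory Filter Set Topology
open scoped ENNReal Pointwise

noncomputable section

variable {Ω : Type*} [MeasurableSpace Ω]

section KomlosHelpers

variable {Ω : Type*} [MeasurableSpace Ω]

/-- The strictly concave bounded utility `x ↦ 1 - e^{-x}`. -/
def phiU (x : ℝ) : ℝ := 1 - Real.exp (-x)

lemma phiU_le_one (x : ℝ) : phiU x ≤ 1 := by
  have := Real.exp_pos (-x); unfold phiU; linarith

lemma phiU_nonneg {x : ℝ} (hx : 0 ≤ x) : 0 ≤ phiU x := by
  have : Real.exp (-x) ≤ 1 := Real.exp_le_one_iff.mpr (by linarith)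
  unfold phiU; linarith

lemma phiU_identity_le {a b : ℝ} (hab : a ≤ b) :
    phiU ((a + b) / 2) = (phiU a + phiU b) / 2
      + Real.exp (-a) / 2 * (1 - Real.exp (-(b - a) / 2)) ^ 2 := by
  have h1 : Real.exp (-b) = Real.exp (-a) * Real.exp (-(b - a) / 2) ^ 2 := by
    rw [sq, ← Real.exp_add, ← Real.exp_add]; ring_nf
  have h2 : Real.exp (-((a + b) / 2)) = Real.exp (-a) * Real.exp (-(b - a) / 2) := by
    rw [← Real.exp_add]; ring_nf
  unfold phiU
  rw [h1, h2]; ring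

lemma phiU_identity (a b : ℝ) :
    phiU ((a + b) / 2) = (phiU a + phiU b) / 2
      + Real.exp (-(min a b)) / 2 * (1 - Real.exp (-|a - b| / 2)) ^ 2 := by
  rcases le_total a b with hab | hab
  · rw [min_eq_left hab, abs_of_nonpos (by linarith), neg_sub]
    exact phiU_identity_le hab
  · rw [min_eq_right hab, abs_of_nonneg (by linarith), add_comm a b,
      add_comm (phiU a) (phiU b)]
    exact phiU_identity_le hab

lemma phiU_integrable {μ : Measure Ω} [IsFiniteMeasure μ]
    {f : Ω → ℝ} (hf : AEMeasurable f μ) (hf0 : 0 ≤ᵐ[μ] f) :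
    Integrable (fun ω => phiU (f ω)) μ := by
  have hc : Continuous phiU := by
    unfold phiU; exact continuous_const.sub (Real.continuous_exp.comp continuous_neg)
  refine Integrable.mono' (integrable_const 1)
    (hc.measurable.comp_aemeasurable hf).aestronglyMeasurable ?_
  filter_upwards [hf0] with ω hω
  rw [Real.norm_eq_abs, abs_le]
  exact ⟨by linarith [phiU_nonneg hω], phiU_le_one _⟩

/-- The utility functional `f ↦ ∫ (1 - e^{-f}) dμ`. -/
def uInt (μ : Measure Ω) (f : Ω → ℝ) : ℝ := ∫ ω, phiU (f ω) ∂μ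

lemma uInt_nonneg {μ : Measure Ω} {f : Ω → ℝ} (hf0 : 0 ≤ᵐ[μ] f) : 0 ≤ uInt μ f :=
  integral_nonneg_of_ae (hf0.mono fun _ h => phiU_nonneg h)

lemma uInt_le {μ : Measure Ω} [IsFiniteMeasure μ] {f : Ω → ℝ}
    (hf : AEMeasurable f μ) (hf0 : 0 ≤ᵐ[μ] f) : uInt μ f ≤ (μ univ).toReal := by
  have h := integral_mono_ae (phiU_integrable hf hf0) (integrable_const 1)
    (Eventually.of_forall fun ω => phiU_le_one (f ω))
  simp [integral_const, smul_eq_mul] at h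
  exact h

/-- Quantitative strict concavity gain for the utility functional. -/
lemma gain_bound (μ : Measure Ω) [IsFiniteMeasure μ]
    {f g : Ω → ℝ} (hf : AEMeasurable f μ) (hg : AEMeasurable g μ)
    (hf0 : 0 ≤ᵐ[μ] f) (hg0 : 0 ≤ᵐ[μ] g) {M α : ℝ} (hα : 0 < α) :
    ENNReal.ofReal (Real.exp (-M) / 2 * (1 - Real.exp (-α / 2)) ^ 2)
        * μ {ω | min (f ω) (g ω) ≤ M ∧ α ≤ |f ω - g ω|}
      ≤ ENNReal.ofReal (uInt μ (fun ω => (f ω + g ω) / 2)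
          - (uInt μ f + uInt μ g) / 2) := by
  set β : ℝ := Real.exp (-M) / 2 * (1 - Real.exp (-α / 2)) ^ 2 with hβdef
  set G : Ω → ℝ := fun ω =>
    Real.exp (-(min (f ω) (g ω))) / 2 * (1 - Real.exp (-|f ω - g ω| / 2)) ^ 2 with hGdef
  have hG0 : ∀ ω, 0 ≤ G ω := fun ω => by positivity
  have hGmeas : AEMeasurable G μ := by
    have h1 : AEMeasurable (fun ω => Real.exp (-(min (f ω) (g ω)))) μ :=
      Real.measurable_exp.comp_aemeasurable (hf.min hg).neg
    have h2 : AEMeasurable (fun ω => Real.exp (-|f ω - g ω| / 2)) μ :=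
      Real.measurable_exp.comp_aemeasurable
        ((measurable_abs.comp_aemeasurable (hf.sub hg)).neg.div_const 2)
    exact (h1.div_const 2).mul ((aemeasurable_const.sub h2).pow_const 2)
  have hmid : AEMeasurable (fun ω => (f ω + g ω) / 2) μ := (hf.add hg).div_const 2
  have hmid0 : 0 ≤ᵐ[μ] fun ω => (f ω + g ω) / 2 := by
    filter_upwards [hf0, hg0] with ω h1 h2; linarith
  have hIf := phiU_integrable hf hf0
  have hIg := phiU_integrable hg hg0
  have hImid := phiU_integrable hmid hmid0
  have hGeq : G = fun ω => phiU ((f ω + g ω) / 2) - (phiU (f ω) + phiU (g ω)) / 2 := by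
    funext ω; rw [phiU_identity (f ω) (g ω)]; ring
  have hI2 : Integrable (fun ω => (phiU (f ω) + phiU (g ω)) / 2) μ :=
    (hIf.add hIg).div_const 2
  have hGint : Integrable G μ := by
    rw [hGeq]; exact hImid.sub hI2
  have hGintegral : ∫ ω, G ω ∂μ = uInt μ (fun ω => (f ω + g ω) / 2)
      - (uInt μ f + uInt μ g) / 2 := by
    rw [hGeq, integral_sub hImid hI2, integral_div, integral_add hIf hIg]; rfl
  have hsub : {ω | min (f ω) (g ω) ≤ M ∧ α ≤ |f ω - g ω|}
      ⊆ {ω | ENNReal.ofReal β ≤ ENNReal.ofReal (G ω)} := by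
    intro ω ⟨h1, h2⟩
    apply ENNReal.ofReal_le_ofReal
    have e1 : Real.exp (-M) ≤ Real.exp (-(min (f ω) (g ω))) :=
      Real.exp_le_exp.mpr (by linarith)
    have e2 : (1 - Real.exp (-α / 2)) ^ 2 ≤ (1 - Real.exp (-|f ω - g ω| / 2)) ^ 2 := by
      have h3 : Real.exp (-|f ω - g ω| / 2) ≤ Real.exp (-α / 2) :=
        Real.exp_le_exp.mpr (by linarith)
      have h4 : Real.exp (-α / 2) ≤ 1 := Real.exp_le_one_iff.mpr (by linarith)
      apply pow_le_pow_left₀ (by linarith)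
      linarith
    exact mul_le_mul (by linarith) e2 (sq_nonneg _) (by positivity)
  calc ENNReal.ofReal β * μ {ω | min (f ω) (g ω) ≤ M ∧ α ≤ |f ω - g ω|}
      ≤ ENNReal.ofReal β * μ {ω | ENNReal.ofReal β ≤ ENNReal.ofReal (G ω)} :=
        mul_le_mul_right (measure_mono hsub) _
    _ ≤ ∫⁻ ω, ENNReal.ofReal (G ω) ∂μ :=
        mul_meas_ge_le_lintegral₀ hGmeas.ennreal_ofReal _
    _ = ENNReal.ofReal (∫ ω, G ω ∂μ) :=
        (ofReal_integral_eq_lintegral_ofReal hGint (Eventually.of_forall hG0)).symm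
    _ = _ := by rw [hGintegral]

end KomlosHelpers

/-- **Compactness lemma for `C`.** For every sequence `(g̃ⁿ)` in `C` there is a sequence
`(gⁿ)` of finite convex combinations `gⁿ ∈ conv(g̃ⁿ, g̃ⁿ⁺¹, …)` converging μ-a.e. to an
element `g ∈ C` (in particular `g` is μ-a.e. finite). -/
theorem compactness_lemma_primal (μ : Measure Ω) [IsFiniteMeasure μ]
    (C D : Set (Ω → ℝ))
    (hCsub : C ⊆ L0plus μ) (hDsub : D ⊆ L0plus μ)
    (hCconv : Convex ℝ C) (hDconv : Convex ℝ D)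
    (hCsolid : SolidIn μ C) (hDsolid : SolidIn μ D)
    (hCclosed : ClosedInMeasure μ C) (hDclosed : ClosedInMeasure μ D)
    (hCpolar : C = muPolar μ D) (hDpolar : D = muPolar μ C)
    (hCbddL1 : ∃ K : ℝ≥0∞, K ≠ ⊤ ∧ ∀ g ∈ C, ∫⁻ ω, ENNReal.ofReal (g ω) ∂μ ≤ K)
    (hDbddL0 : ∀ ε : ℝ≥0∞, 0 < ε → ∃ M : ℝ, ∀ h ∈ D, μ {ω | M < h ω} ≤ ε)
    (gt : ℕ → Ω → ℝ) (hgt : ∀ n, gt n ∈ C) :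
    ∃ (g : ℕ → Ω → ℝ) (glim : Ω → ℝ),
      (∀ n, g n ∈ convexHull ℝ (gt '' Ici n)) ∧
      glim ∈ C ∧
      ∀ᵐ ω ∂μ, Tendsto (fun n => g n ω) atTop (𝓝 (glim ω)) := by
  classical
  obtain ⟨K, hKtop, hK⟩ := hCbddL1
  -- the tail convex hulls
  set KH : ℕ → Set (Ω → ℝ) := fun n => convexHull ℝ (gt '' Ici n) with hKHdef
  have hKHsub : ∀ n, KH n ⊆ C := fun n =>
    convexHull_min (by rintro _ ⟨k, _, rfl⟩; exact hgt k) hCconv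
  have hKHmono : ∀ {m n : ℕ}, m ≤ n → KH n ⊆ KH m := fun {m n} h =>
    convexHull_mono (image_mono (Ici_subset_Ici.mpr h))
  have hmemKH : ∀ n, gt n ∈ KH n := fun n =>
    subset_convexHull ℝ _ ⟨n, self_mem_Ici, rfl⟩
  have hCmeas : ∀ f ∈ C, AEMeasurable f μ := fun f hf => (hCsub hf).1
  have hC0 : ∀ f ∈ C, 0 ≤ᵐ[μ] f := fun f hf => (hCsub hf).2
  -- the value function
  set s : ℕ → ℝ := fun n => sSup (uInt μ '' KH n) with hsdef
  have hbdd : ∀ n, BddAbove (uInt μ '' KH n) := by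
    intro n
    refine ⟨(μ univ).toReal, ?_⟩
    rintro _ ⟨f, hf, rfl⟩
    exact uInt_le (hCmeas f (hKHsub n hf)) (hC0 f (hKHsub n hf))
  have hne : ∀ n, (uInt μ '' KH n).Nonempty := fun n => ⟨_, mem_image_of_mem _ (hmemKH n)⟩
  have hsanti : Antitone s := fun m n hmn =>
    csSup_le_csSup (hbdd m) (hne n) (image_mono (hKHmono hmn))
  have hs_lb : ∀ n, (0:ℝ) ≤ s n := fun n =>
    le_trans (uInt_nonneg (hC0 _ (hgt n))) (le_csSup (hbdd n) (mem_image_of_mem _ (hmemKH n)))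
  have hbddBelow : BddBelow (range s) := ⟨0, by rintro _ ⟨n, rfl⟩; exact hs_lb n⟩
  set sL : ℝ := ⨅ n, s n with hsLdef
  have hsL_le : ∀ n, sL ≤ s n := fun n => ciInf_le hbddBelow n
  have hsLim : Tendsto s atTop (𝓝 sL) := tendsto_atTop_ciInf hsanti hbddBelow
  -- near-optimal selections
  have hh : ∀ n : ℕ, ∃ f, f ∈ KH n ∧ s n - 1 / (n + 1) < uInt μ f := by
    intro n
    have hlt : s n - 1 / ((n:ℝ) + 1) < s n := by
      have : (0:ℝ) < 1 / ((n:ℝ) + 1) := by positivity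
      linarith
    obtain ⟨x, hx, hltx⟩ := exists_lt_of_lt_csSup (hne n) hlt
    obtain ⟨f, hf, rfl⟩ := hx
    exact ⟨f, hf, hltx⟩
  choose h hhK hhu using hh
  have hhC : ∀ n, h n ∈ C := fun n => hKHsub n (hhK n)
  -- Cauchy in measure
  have key : ∀ α ε : ℝ, 0 < α → 0 < ε → ∃ N : ℕ, ∀ m n : ℕ, N ≤ m → N ≤ n →
      μ {ω | α ≤ |h n ω - h m ω|} ≤ ENNReal.ofReal ε := by
    intro α ε hα hε
    set M : ℝ := max 1 (2 * K.toReal / ε) with hMdef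
    have hM1 : (1:ℝ) ≤ M := le_max_left _ _
    have hM0 : (0:ℝ) < M := by linarith
    have hMarkov : ∀ f ∈ C, μ {ω | M < f ω} ≤ ENNReal.ofReal (ε / 2) := by
      intro f hf
      have h1 : ENNReal.ofReal M * μ {ω | M < f ω} ≤ ∫⁻ ω, ENNReal.ofReal (f ω) ∂μ :=
        calc ENNReal.ofReal M * μ {ω | M < f ω}
            ≤ ENNReal.ofReal M * μ {ω | ENNReal.ofReal M ≤ ENNReal.ofReal (f ω)} :=
              mul_le_mul_right
                (measure_mono fun ω hω => ENNReal.ofReal_le_ofReal (le_of_lt hω)) _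
          _ ≤ _ := mul_meas_ge_le_lintegral₀ (hCmeas f hf).ennreal_ofReal _
      have h3 : K ≤ ENNReal.ofReal M * ENNReal.ofReal (ε / 2) := by
        rw [← ENNReal.ofReal_mul (by linarith), ← ENNReal.ofReal_toReal hKtop]
        apply ENNReal.ofReal_le_ofReal
        have hM2 : 2 * K.toReal / ε ≤ M := le_max_right _ _
        calc K.toReal = (2 * K.toReal / ε) * (ε / 2) := by field_simp
          _ ≤ M * (ε / 2) := mul_le_mul_of_nonneg_right hM2 (by positivity)
      exact (ENNReal.mul_le_mul_iff_right (ENNReal.ofReal_pos.mpr hM0).ne'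
        ENNReal.ofReal_ne_top).mp (h1.trans ((hK f hf).trans h3))
    set β : ℝ := Real.exp (-M) / 2 * (1 - Real.exp (-α / 2)) ^ 2 with hβdef
    have hβ : 0 < β := by
      have h1 : Real.exp (-α / 2) < 1 := Real.exp_lt_one_iff.mpr (by linarith)
      have h2 : (0:ℝ) < 1 - Real.exp (-α / 2) := by linarith
      have h3 := Real.exp_pos (-M)
      nlinarith [pow_pos h2 2]
    set η : ℝ := β * ε / 8 with hηdef
    have hη : 0 < η := by positivity
    obtain ⟨N₁, hN₁⟩ : ∃ N : ℕ, ∀ n, N ≤ n → s n ≤ sL + η := by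
      have := hsLim.eventually_lt_const (show sL < sL + η by linarith)
      obtain ⟨N, hN⟩ := eventually_atTop.mp this
      exact ⟨N, fun n hn => (hN n hn).le⟩
    obtain ⟨N₂, hN₂⟩ : ∃ N : ℕ, ∀ n : ℕ, N ≤ n → 1 / ((n:ℝ) + 1) ≤ η := by
      obtain ⟨N, hN⟩ := exists_nat_gt (1 / η)
      refine ⟨N, fun n hn => ?_⟩
      have h1 : 1 / η < (n:ℝ) + 1 := by
        have : (N:ℝ) ≤ (n:ℝ) := Nat.cast_le.mpr hn
        linarith
      rw [div_le_iff₀ (by positivity)]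
      rw [div_lt_iff₀ hη] at h1
      nlinarith
    refine ⟨max N₁ N₂, fun m n hm hn => ?_⟩
    set N0 : ℕ := max N₁ N₂ with hN0def
    -- midpoint
    set mid : Ω → ℝ := fun ω => (h n ω + h m ω) / 2 with hmiddef
    have hmidKH : mid ∈ KH N0 := by
      have hn' : h n ∈ KH N0 := hKHmono hn (hhK n)
      have hm' : h m ∈ KH N0 := hKHmono hm (hhK m)
      have := (convex_convexHull ℝ (gt '' Ici N0)) hn' hm'
        (by norm_num : (0:ℝ) ≤ 1/2) (by norm_num : (0:ℝ) ≤ 1/2) (by norm_num)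
      convert this using 1
      funext ω
      simp only [Pi.add_apply, Pi.smul_apply, smul_eq_mul, hmiddef]
      ring
    have hmidC : mid ∈ C := hKHsub N0 hmidKH
    have humid : uInt μ mid ≤ sL + η :=
      le_trans (le_csSup (hbdd N0) (mem_image_of_mem _ hmidKH)) (hN₁ N0 (le_max_left _ _))
    have hun : sL - η ≤ uInt μ (h n) := by
      have h1 := hhu n
      have h2 : 1 / ((n:ℝ) + 1) ≤ η := hN₂ n (le_trans (le_max_right _ _) hn)
      have h3 := hsL_le n
      linarith
    have hum : sL - η ≤ uInt μ (h m) := by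
      have h1 := hhu m
      have h2 : 1 / ((m:ℝ) + 1) ≤ η := hN₂ m (le_trans (le_max_right _ _) hm)
      have h3 := hsL_le m
      linarith
    have hgain := gain_bound μ (hCmeas _ (hhC n)) (hCmeas _ (hhC m))
      (hC0 _ (hhC n)) (hC0 _ (hhC m)) (M := M) hα
    have hdiff : uInt μ (fun ω => (h n ω + h m ω) / 2)
        - (uInt μ (h n) + uInt μ (h m)) / 2 ≤ β * (ε / 4) := by
      have : uInt μ (fun ω => (h n ω + h m ω) / 2) = uInt μ mid := rfl
      rw [this, hηdef] at *
      nlinarith [humid, hun, hum]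
    have hA : μ {ω | min (h n ω) (h m ω) ≤ M ∧ α ≤ |h n ω - h m ω|}
        ≤ ENNReal.ofReal (ε / 4) := by
      have h1 : ENNReal.ofReal β
          * μ {ω | min (h n ω) (h m ω) ≤ M ∧ α ≤ |h n ω - h m ω|}
          ≤ ENNReal.ofReal β * ENNReal.ofReal (ε / 4) := by
        refine hgain.trans ?_
        rw [← ENNReal.ofReal_mul (le_of_lt hβ)]
        exact ENNReal.ofReal_le_ofReal hdiff
      exact (ENNReal.mul_le_mul_iff_right (ENNReal.ofReal_pos.mpr hβ).ne'
        ENNReal.ofReal_ne_top).mp h1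
    have hsubset : {ω | α ≤ |h n ω - h m ω|}
        ⊆ {ω | min (h n ω) (h m ω) ≤ M ∧ α ≤ |h n ω - h m ω|} ∪ {ω | M < h n ω} := by
      intro ω hω
      by_cases hc : min (h n ω) (h m ω) ≤ M
      · exact Or.inl ⟨hc, hω⟩
      · exact Or.inr (lt_of_lt_of_le (lt_of_not_ge hc) (min_le_left _ _))
    calc μ {ω | α ≤ |h n ω - h m ω|}
        ≤ μ ({ω | min (h n ω) (h m ω) ≤ M ∧ α ≤ |h n ω - h m ω|} ∪ {ω | M < h n ω}) :=
          measure_mono hsubset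
      _ ≤ μ {ω | min (h n ω) (h m ω) ≤ M ∧ α ≤ |h n ω - h m ω|} + μ {ω | M < h n ω} :=
          measure_union_le _ _
      _ ≤ ENNReal.ofReal (ε / 4) + ENNReal.ofReal (ε / 2) :=
          add_le_add hA (hMarkov _ (hhC n))
      _ ≤ ENNReal.ofReal ε := by
          rw [← ENNReal.ofReal_add (by positivity) (by positivity)]
          exact ENNReal.ofReal_le_ofReal (by linarith)
  -- extract an a.e. convergent subsequence
  have hhalf : ∀ k : ℕ, (0:ℝ) < (1/2) ^ k := fun k => by positivity
  choose N hN using fun k : ℕ => key ((1/2) ^ k) ((1/2) ^ k) (hhalf k) (hhalf k)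
  set φf : ℕ → ℕ := fun k => k + (Finset.range (k + 1)).sup N with hφdef
  have hφmono : Monotone φf := by
    intro a b hab
    exact add_le_add hab (Finset.sup_mono (Finset.range_subset_range.mpr (by omega)))
  have hφk : ∀ k, k ≤ φf k := fun k => Nat.le_add_right _ _
  have hφN : ∀ k, N k ≤ φf k := fun k =>
    le_trans (Finset.le_sup (Finset.mem_range.mpr (Nat.lt_succ_self k))) (Nat.le_add_left _ _)
  set g : ℕ → Ω → ℝ := fun k => h (φf k) with hgdef
  have hgKH : ∀ k, g k ∈ KH k := fun k => hKHmono (hφk k) (hhK (φf k))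
  have hgC : ∀ k, g k ∈ C := fun k => hKHsub k (hgKH k)
  set E : ℕ → Set Ω := fun k => {ω | (1/2) ^ k ≤ |g (k + 1) ω - g k ω|} with hEdef
  have hE : ∀ k, μ (E k) ≤ ENNReal.ofReal ((1/2) ^ k) := fun k =>
    hN k (φf k) (φf (k + 1)) (hφN k) (le_trans (hφN k) (hφmono (Nat.le_succ k)))
  have hsum : (∑' k, μ (E k)) ≠ ⊤ := by
    have h1 : (∑' k, μ (E k)) ≤ ∑' k : ℕ, ENNReal.ofReal ((1/2) ^ k) :=
      ENNReal.tsum_le_tsum hE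
    have h2 : (∑' k : ℕ, ENNReal.ofReal ((1/2) ^ k))
        = ENNReal.ofReal (∑' k : ℕ, (1/2 : ℝ) ^ k) :=
      (ENNReal.ofReal_tsum_of_nonneg (fun k => by positivity)
        (summable_geometric_of_lt_one (by norm_num) (by norm_num))).symm
    exact ne_top_of_le_ne_top (by rw [h2]; exact ENNReal.ofReal_ne_top) h1
  have hae : ∀ᵐ ω ∂μ, ∀ᶠ k in atTop, ω ∉ E k := by
    have h1 := measure_limsup_atTop_eq_zero hsum
    have h2 : ∀ᵐ ω ∂μ, ω ∉ limsup E atTop := by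
      rw [ae_iff]; simpa using h1
    filter_upwards [h2] with ω hω
    exact Filter.not_frequently.mp fun hfreq =>
      hω (mem_limsup_iff_frequently_mem.mpr hfreq)
  have hcauchy : ∀ᵐ ω ∂μ, ∃ L, Tendsto (fun k => g k ω) atTop (𝓝 L) := by
    filter_upwards [hae] with ω hω
    obtain ⟨Kk, hKk⟩ := eventually_atTop.mp hω
    apply cauchySeq_tendsto_of_complete
    apply cauchySeq_of_summable_dist
    rw [← summable_nat_add_iff Kk]
    have hbound : ∀ k : ℕ, dist (g (k + Kk) ω) (g (k + Kk + 1) ω)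
        ≤ (1/2:ℝ) ^ Kk * (1/2) ^ k := by
      intro k
      have h1 := hKk (k + Kk) (Nat.le_add_left _ _)
      have h2 : |g (k + Kk + 1) ω - g (k + Kk) ω| ≤ (1/2:ℝ) ^ (k + Kk) :=
        le_of_not_ge h1
      rw [Real.dist_eq, abs_sub_comm]
      calc |g (k + Kk + 1) ω - g (k + Kk) ω| ≤ (1/2:ℝ) ^ (k + Kk) := h2
        _ = (1/2:ℝ) ^ Kk * (1/2) ^ k := by rw [pow_add]; ring
    exact Summable.of_nonneg_of_le (fun _ => dist_nonneg) hbound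
      ((summable_geometric_of_lt_one (by norm_num) (by norm_num)).mul_left _)
  set glim : Ω → ℝ := fun ω => limUnder atTop (fun k => g k ω) with hglimdef
  have hglim_tendsto : ∀ᵐ ω ∂μ, Tendsto (fun k => g k ω) atTop (𝓝 (glim ω)) := by
    filter_upwards [hcauchy] with ω hω
    exact tendsto_nhds_limUnder hω
  have hgmeas : ∀ k, AEMeasurable (g k) μ := fun k => hCmeas _ (hgC k)
  have hglim_meas : AEMeasurable glim μ :=
    aemeasurable_of_tendsto_metrizable_ae atTop hgmeas hglim_tendsto
  have hg0 : ∀ᵐ ω ∂μ, ∀ k, 0 ≤ g k ω := ae_all_iff.mpr fun k => hC0 _ (hgC k)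
  have hglim0 : 0 ≤ᵐ[μ] glim := by
    filter_upwards [hglim_tendsto, hg0] with ω h1 h2
    exact ge_of_tendsto' h1 h2
  have hglimC : glim ∈ C :=
    hCclosed g glim hgC ⟨hglim_meas, hglim0⟩
      (tendstoInMeasure_of_tendsto_ae (fun k => (hgmeas k).aestronglyMeasurable)
        hglim_tendsto)
  exact ⟨g, glim, hgKH, hglimC, hglim_tendsto⟩
end
end

section
/- For every x > 0, the family {U⁺(g) : g ∈ C(x)} of positive parts U⁺(g) := max(U(g), 0) is uniformly integrable in L¹(μ). -/
open MeasureTheory Filter Set Topology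
open scoped ENNReal Pointwise

noncomputable section

variable {Ω : Type*} [MeasurableSpace Ω]

/-- Sublinear growth of `U⁺`: since `U'` tends to `0` at infinity and `U` is increasing
on `(0,∞)`, for every `η > 0` there is `c > 0` with `U⁺(t) ≤ η t + c` for all `t ≥ 0`. -/
theorem Uplus_sublinear (U U' : ℝ → ℝ)
    (hUmono : StrictMonoOn U (Ioi 0))
    (hUderiv : ∀ x ∈ Ioi (0:ℝ), HasDerivAt U (U' x) x)
    (hInadaInf : Tendsto U' atTop (𝓝 0)) :
    ∀ η : ℝ, 0 < η → ∃ c : ℝ, 0 < c ∧ ∀ t : ℝ, 0 ≤ t → max (U t) 0 ≤ η * t + c := by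
  have hUcont : ContinuousOn U (Ioi 0) := fun z hz =>
    (hUderiv z hz).continuousAt.continuousWithinAt
  intro η hη
  obtain ⟨a, ha⟩ := eventually_atTop.mp (hInadaInf.eventually_lt_const hη)
  set y : ℝ := max a 1 with hydef
  have hy0 : (0:ℝ) < y := lt_of_lt_of_le one_pos (le_max_right _ _)
  have hyη : ∀ z, y ≤ z → U' z < η := fun z hz =>
    ha z (le_trans (le_max_left _ _) hz)
  set M : ℝ := max (max (U y) (U 0)) 0 with hMdef
  have hM0 : 0 ≤ M := le_max_right _ _
  refine ⟨M + 1, by linarith, ?_⟩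
  intro t ht
  have hUyM : U y ≤ M := le_trans (le_max_left _ _) (le_max_left _ _)
  rcases ht.eq_or_lt with h0 | h0
  · have h1 : max (U 0) 0 ≤ M := max_le_max (le_max_right _ _) le_rfl
    rw [← h0]
    nlinarith
  · rcases le_or_gt t y with hty | hty
    · have hUt : U t ≤ U y := hUmono.monotoneOn (mem_Ioi.mpr h0) (mem_Ioi.mpr hy0) hty
      have h1 : max (U t) 0 ≤ M := max_le (le_trans hUt hUyM) hM0
      nlinarith
    · have hcont : ContinuousOn U (Icc y t) := hUcont.mono fun z hz =>
        mem_Ioi.mpr (lt_of_lt_of_le hy0 hz.1)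
      have hder : ∀ z ∈ Ioo y t, HasDerivAt U (U' z) z := fun z hz =>
        hUderiv z (mem_Ioi.mpr (lt_trans hy0 hz.1))
      obtain ⟨ξ, hξ, hs⟩ := exists_hasDerivAt_eq_slope U U' hty hcont hder
      rw [eq_div_iff (sub_ne_zero.mpr hty.ne')] at hs
      have hξη : U' ξ < η := hyη ξ hξ.1.le
      have h2 : U t ≤ U y + η * (t - y) := by
        nlinarith [mul_le_mul_of_nonneg_right hξη.le (by linarith : (0:ℝ) ≤ t - y)]
      have h3 : U t ≤ η * t + (M + 1) := by nlinarith [mul_nonneg hη.le hy0.le]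
      exact max_le h3 (by nlinarith)

/-- `U⁺ ∘ g` is a.e. strongly measurable for `g` a.e.-nonnegative and a.e.-measurable,
with `U` merely continuous on `(0,∞)`. -/
theorem Uplus_aestronglyMeasurable (μ : Measure Ω) (U : ℝ → ℝ)
    (hUcont : ContinuousOn U (Ioi 0))
    (g' : Ω → ℝ) (hg'm : AEMeasurable g' μ) (hg'pos : 0 ≤ᵐ[μ] g') (x : ℝ) (hx : 0 < x) :
    AEStronglyMeasurable (fun ω => max (U (x * g' ω)) 0) μ := by
  classical
  set F : ℝ → ℝ := fun t => max (U t) 0 with hFdef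
  have hFcont : ContinuousOn F (Ioi 0) :=
    (continuous_id.max continuous_const).comp_continuousOn hUcont
  set g₀ : Ω → ℝ := fun ω => max (x * hg'm.mk g' ω) 0 with hg₀def
  have hg₀m : Measurable g₀ := (measurable_const.mul hg'm.measurable_mk).max measurable_const
  have hg₀nn : ∀ ω, 0 ≤ g₀ ω := fun ω => le_max_right _ _
  set S : Set Ω := g₀ ⁻¹' (Ioi 0) with hSdef
  have hSm : MeasurableSet S := hg₀m measurableSet_Ioi
  have hmemS : ∀ᵐ ω ∂μ.restrict S, g₀ ω ∈ Ioi (0:ℝ) := ae_restrict_mem hSm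
  have hmap : ((μ.restrict S).map g₀).restrict (Ioi 0) = (μ.restrict S).map g₀ :=
    Measure.restrict_eq_self_of_ae_mem
      ((ae_map_iff hg₀m.aemeasurable measurableSet_Ioi).mpr hmemS)
  have hFS : AEMeasurable (F ∘ g₀) (μ.restrict S) := by
    refine AEMeasurable.comp_aemeasurable ?_ hg₀m.aemeasurable
    rw [← hmap]
    exact hFcont.aemeasurable measurableSet_Ioi
  have hFSc : AEMeasurable (F ∘ g₀) (μ.restrict Sᶜ) := by
    have heq : (fun _ : Ω => F 0) =ᵐ[μ.restrict Sᶜ] (F ∘ g₀) := by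
      filter_upwards [ae_restrict_mem hSm.compl] with ω hω
      have h0 : g₀ ω = 0 := le_antisymm (by simpa [hSdef] using hω) (hg₀nn ω)
      simp [Function.comp, h0]
    exact aemeasurable_const.congr heq
  have hcomb : AEMeasurable (F ∘ g₀) μ := by
    rw [← Measure.restrict_add_restrict_compl (μ := μ) hSm]
    exact hFS.add_measure hFSc
  have hfinal : (F ∘ g₀) =ᵐ[μ] fun ω => max (U (x * g' ω)) 0 := by
    filter_upwards [hg'm.ae_eq_mk, hg'pos] with ω h1 h2
    have : g₀ ω = x * g' ω := by
      rw [hg₀def]; simp only []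
      rw [← h1, max_eq_left (mul_nonneg hx.le h2)]
    simp [Function.comp, this, hFdef]
  exact (hcomb.congr hfinal).aestronglyMeasurable

/-- **Uniform integrability of `(U⁺(g))_{g ∈ C(x)}`.** For every `x > 0`, the family
of positive parts `U⁺(g) = max (U g) 0`, `g ∈ C(x) = x•C`, is uniformly integrable. -/
theorem unifIntegrable_Uplus (μ : Measure Ω) [IsFiniteMeasure μ]
    (U U' : ℝ → ℝ)
    (hUconc : StrictConcaveOn ℝ (Ioi 0) U)
    (hUmono : StrictMonoOn U (Ioi 0))
    (hUderiv : ∀ x ∈ Ioi (0:ℝ), HasDerivAt U (U' x) x)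
    (hU'cont : ContinuousOn U' (Ioi 0))
    (hInada0 : Tendsto U' (𝓝[>] (0:ℝ)) atTop)
    (hInadaInf : Tendsto U' atTop (𝓝 0))
    (C D : Set (Ω → ℝ))
    (hCsub : C ⊆ L0plus μ) (hDsub : D ⊆ L0plus μ)
    (hCconv : Convex ℝ C) (hDconv : Convex ℝ D)
    (hCsolid : SolidIn μ C) (hDsolid : SolidIn μ D)
    (hCclosed : ClosedInMeasure μ C) (hDclosed : ClosedInMeasure μ D)
    (hCpolar : C = muPolar μ D) (hDpolar : D = muPolar μ C)
    (hCbddL1 : ∃ K : ℝ≥0∞, K ≠ ⊤ ∧ ∀ g ∈ C, ∫⁻ ω, ENNReal.ofReal (g ω) ∂μ ≤ K)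
    (hDbddL0 : ∀ ε : ℝ≥0∞, 0 < ε → ∃ M : ℝ, ∀ h ∈ D, μ {ω | M < h ω} ≤ ε)
    (x : ℝ) (hx : 0 < x) :
    UniformIntegrable (fun (g : ↥(x • C)) (ω : Ω) => max (U (g.1 ω)) 0) 1 μ := by
  classical
  obtain ⟨K, hKtop, hK⟩ := hCbddL1
  set K' : ℝ≥0∞ := ENNReal.ofReal x * K with hK'def
  have hK'top : K' ≠ ⊤ := ENNReal.mul_ne_top ENNReal.ofReal_ne_top hKtop
  have hUcont : ContinuousOn U (Ioi 0) := fun z hz =>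
    (hUderiv z hz).continuousAt.continuousWithinAt
  have sublin := Uplus_sublinear U U' hUmono hUderiv hInadaInf
  -- every member of `x • C` is of the form `x • g'`, `g' ∈ C`
  have hmem : ∀ g : ↥(x • C), ∃ g' ∈ C, g.1 = fun ω => x * g' ω := by
    rintro ⟨g, hg⟩
    obtain ⟨g', hg', rfl⟩ := hg
    exact ⟨g', hg', rfl⟩
  -- L¹-bound for scaled elements
  have hCint : ∀ g' ∈ C, ∫⁻ ω, ENNReal.ofReal (x * g' ω) ∂μ ≤ K' := by
    intro g' hg'
    calc ∫⁻ ω, ENNReal.ofReal (x * g' ω) ∂μ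
        = ∫⁻ ω, ENNReal.ofReal x * ENNReal.ofReal (g' ω) ∂μ := by
          simp_rw [ENNReal.ofReal_mul hx.le]
      _ = ENNReal.ofReal x * ∫⁻ ω, ENNReal.ofReal (g' ω) ∂μ :=
          lintegral_const_mul' _ _ ENNReal.ofReal_ne_top
      _ ≤ K' := mul_le_mul_right (hK g' hg') _
  -- the central set-integral estimate
  have main : ∀ (η c : ℝ), 0 < η → 0 < c →
      (∀ t : ℝ, 0 ≤ t → max (U t) 0 ≤ η * t + c) →
      ∀ g' ∈ C, ∀ s : Set Ω,
      ∫⁻ ω in s, ‖max (U (x * g' ω)) 0‖₊ ∂μ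
        ≤ ENNReal.ofReal η * K' + ENNReal.ofReal c * μ s := by
    intro η c hη hc hbd g' hg' s
    obtain ⟨hg'm, hg'pos⟩ := hCsub hg'
    have hae : ∀ᵐ ω ∂μ.restrict s, (‖max (U (x * g' ω)) 0‖₊ : ℝ≥0∞)
        ≤ ENNReal.ofReal η * ENNReal.ofReal (x * g' ω) + ENNReal.ofReal c := by
      filter_upwards [ae_restrict_of_ae hg'pos] with ω hω
      have h1 : (0:ℝ) ≤ x * g' ω := mul_nonneg hx.le hω
      have h2 : max (U (x * g' ω)) 0 ≤ η * (x * g' ω) + c := hbd _ h1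
      have h3 : (‖max (U (x * g' ω)) 0‖₊ : ℝ≥0∞) = ENNReal.ofReal (max (U (x * g' ω)) 0) := by
        rw [← enorm_eq_nnnorm, ← ofReal_norm, Real.norm_of_nonneg (le_max_right _ _)]
      rw [h3]
      calc ENNReal.ofReal (max (U (x * g' ω)) 0)
          ≤ ENNReal.ofReal (η * (x * g' ω) + c) := ENNReal.ofReal_le_ofReal h2
        _ ≤ ENNReal.ofReal (η * (x * g' ω)) + ENNReal.ofReal c := ENNReal.ofReal_add_le
        _ = ENNReal.ofReal η * ENNReal.ofReal (x * g' ω) + ENNReal.ofReal c := by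
            rw [ENNReal.ofReal_mul hη.le]
    calc ∫⁻ ω in s, ‖max (U (x * g' ω)) 0‖₊ ∂μ
        ≤ ∫⁻ ω in s, (ENNReal.ofReal η * ENNReal.ofReal (x * g' ω) + ENNReal.ofReal c) ∂μ :=
          lintegral_mono_ae hae
      _ ≤ (∫⁻ ω in s, ENNReal.ofReal η * ENNReal.ofReal (x * g' ω) ∂μ)
            + ∫⁻ _ in s, ENNReal.ofReal c ∂μ := le_of_eq (lintegral_add_right' _ aemeasurable_const)
      _ ≤ ENNReal.ofReal η * K' + ENNReal.ofReal c * μ s := by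
          gcongr
          · calc ∫⁻ ω in s, ENNReal.ofReal η * ENNReal.ofReal (x * g' ω) ∂μ
                = ENNReal.ofReal η * ∫⁻ ω in s, ENNReal.ofReal (x * g' ω) ∂μ :=
                  lintegral_const_mul' _ _ ENNReal.ofReal_ne_top
              _ ≤ ENNReal.ofReal η * ∫⁻ ω, ENNReal.ofReal (x * g' ω) ∂μ :=
                  mul_le_mul_right (setLIntegral_le_lintegral _ _) _
              _ ≤ ENNReal.ofReal η * K' := mul_le_mul_right (hCint g' hg') _
          · rw [setLIntegral_const]
    -- end main
  -- a.e. strong measurability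
  have hmeas : ∀ g : ↥(x • C),
      AEStronglyMeasurable (fun ω => max (U (g.1 ω)) 0) μ := by
    intro g
    obtain ⟨g', hg', hgeq⟩ := hmem g
    obtain ⟨hg'm, hg'pos⟩ := hCsub hg'
    rw [hgeq]
    exact Uplus_aestronglyMeasurable μ U hUcont g' hg'm hg'pos x hx
  refine ⟨hmeas, ?_, ?_⟩
  · -- UnifIntegrable
    intro ε hε
    set B : ℝ := K'.toReal with hBdef
    have hB0 : 0 ≤ B := ENNReal.toReal_nonneg
    have hK'B : K' ≤ ENNReal.ofReal (B + 1) := by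
      rw [← ENNReal.ofReal_toReal hK'top]
      exact ENNReal.ofReal_le_ofReal (by linarith)
    set η : ℝ := (ε / 2) / (B + 1) with hηdef
    have hη : 0 < η := div_pos (by linarith) (by linarith)
    obtain ⟨c, hc, hbd⟩ := sublin η hη
    refine ⟨(ε / 2) / c, div_pos (by linarith) hc, ?_⟩
    intro g s hsm hμs
    obtain ⟨g', hg', hgeq⟩ := hmem g
    have hind : eLpNorm (s.indicator fun ω => max (U (g.1 ω)) 0) 1 μ
        = ∫⁻ ω in s, ‖max (U (g.1 ω)) 0‖₊ ∂μ := by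
      rw [eLpNorm_one_eq_lintegral_enorm]
      simp_rw [enorm_eq_nnnorm, nnnorm_indicator_eq_indicator_nnnorm, ENNReal.coe_indicator]
      rw [lintegral_indicator hsm]
    rw [hind, hgeq]
    calc ∫⁻ ω in s, ‖max (U (x * g' ω)) 0‖₊ ∂μ
        ≤ ENNReal.ofReal η * K' + ENNReal.ofReal c * μ s := main η c hη hc hbd g' hg' s
      _ ≤ ENNReal.ofReal (ε / 2) + ENNReal.ofReal (ε / 2) := by
          gcongr
          · calc ENNReal.ofReal η * K' ≤ ENNReal.ofReal η * ENNReal.ofReal (B + 1) :=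
                mul_le_mul_right hK'B _
              _ = ENNReal.ofReal (η * (B + 1)) := (ENNReal.ofReal_mul hη.le).symm
              _ = ENNReal.ofReal (ε / 2) := by
                  rw [hηdef, div_mul_cancel₀ _ (by linarith : B + 1 ≠ 0)]
          · calc ENNReal.ofReal c * μ s ≤ ENNReal.ofReal c * ENNReal.ofReal ((ε / 2) / c) :=
                mul_le_mul_right hμs _
              _ = ENNReal.ofReal (c * ((ε / 2) / c)) := (ENNReal.ofReal_mul hc.le).symm
              _ = ENNReal.ofReal (ε / 2) := by rw [mul_div_cancel₀ _ hc.ne']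
      _ ≤ ENNReal.ofReal ε := by
          rw [← ENNReal.ofReal_add (by linarith) (by linarith)]
          exact ENNReal.ofReal_le_ofReal (by linarith)
  · -- uniform L¹ bound
    obtain ⟨c, hc, hbd⟩ := sublin 1 one_pos
    set Bnd : ℝ≥0∞ := ENNReal.ofReal 1 * K' + ENNReal.ofReal c * μ univ with hBnd
    have hBndtop : Bnd ≠ ⊤ := by
      refine ENNReal.add_ne_top.mpr ⟨ENNReal.mul_ne_top ENNReal.ofReal_ne_top hK'top, ?_⟩
      exact ENNReal.mul_ne_top ENNReal.ofReal_ne_top (measure_ne_top μ _)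
    refine ⟨Bnd.toNNReal, fun g => ?_⟩
    obtain ⟨g', hg', hgeq⟩ := hmem g
    have : eLpNorm (fun ω => max (U (g.1 ω)) 0) 1 μ = ∫⁻ ω, ‖max (U (g.1 ω)) 0‖₊ ∂μ :=
      eLpNorm_one_eq_lintegral_enorm
    rw [this, hgeq]
    calc ∫⁻ ω, ‖max (U (x * g' ω)) 0‖₊ ∂μ
        = ∫⁻ ω in univ, ‖max (U (x * g' ω)) 0‖₊ ∂μ := by rw [Measure.restrict_univ]
      _ ≤ Bnd := main 1 c one_pos hc hbd g' hg' univ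
      _ = Bnd.toNNReal := (ENNReal.coe_toNNReal hBndtop).symm
end
end

section
/- If the process M_t := N_t + ∫₀^t c_s Y_s ds, t ≥ 0, is a martingale with respect to (ℱ_t)_{t≥0} with M₀ = x almost surely for a constant x > 0, and E[∫₀^∞ c_t Y_t dt] = x, then: (a) lim_{t→∞} E[N_t] = 0; (b) for every t ≥ 0, M_t = E[∫₀^∞ c_s Y_s ds | ℱ_t] almost surely, so M is a uniformly integrable martingale; and (c) for every t ≥ 0, N_t = E[∫_t^∞ c_s Y_s ds | ℱ_t] almost surely. -/
open MeasureTheory Filter Set Topology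
open scoped ENNReal

noncomputable section

private lemma aux_intProdLeft {Ω : Type*} {m' : MeasurableSpace Ω}
    {f : ℝ × Ω → ℝ} (hf : StronglyMeasurable[Real.measurableSpace.prod m'] f)
    (ν : Measure ℝ) [SFinite ν] :
    StronglyMeasurable[m'] fun ω => ∫ s, f (s, ω) ∂ν :=
  hf.integral_prod_left'

/-- **Optimal wealth characterisation.** If `M_t := N_t + ∫₀^t c_s Y_s ds` is a
martingale with `M₀ = x` a.s. for a constant `x > 0`, and `E[∫₀^∞ c_t Y_t dt] = x`,
then: (a) `lim_{t→∞} E[N_t] = 0`; (b) for every `t ≥ 0`,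
`M_t = E[∫₀^∞ c_s Y_s ds | ℱ_t]` a.s., so `M` is a uniformly integrable martingale;
and (c) for every `t ≥ 0`, `N_t = E[∫_t^∞ c_s Y_s ds | ℱ_t]` a.s. -/
theorem optimal_wealth {Ω : Type*} {mΩ : MeasurableSpace Ω}
    (μ : Measure Ω) [IsProbabilityMeasure μ] (ℱ : Filtration ℝ mΩ)
    (N c Y : ℝ → Ω → ℝ)
    (hNadp : Adapted ℱ N)
    (hNnonneg : ∀ t, 0 ≤ t → 0 ≤ᵐ[μ] N t)
    (hcprog : ProgMeasurable ℱ c) (hYprog : ProgMeasurable ℱ Y)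
    (hcnonneg : ∀ t ω, 0 ≤ c t ω) (hYnonneg : ∀ t ω, 0 ≤ Y t ω)
    (hcYint : ∀ t, 0 ≤ t → ∀ᵐ ω ∂μ, IntegrableOn (fun s => c s ω * Y s ω) (Ioc 0 t))
    (M : ℝ → Ω → ℝ)
    (hM : ∀ t ω, M t ω = N t ω + ∫ s in Ioc (0:ℝ) t, c s ω * Y s ω)
    (hMint : ∀ t, 0 ≤ t → Integrable (M t) μ)
    (hmart : ∀ s t, 0 ≤ s → s ≤ t → μ[M t | ℱ s] =ᵐ[μ] M s)
    (x : ℝ) (hx : 0 < x)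
    (hM0 : M 0 =ᵐ[μ] fun _ => x)
    (htotal : ∫⁻ ω, (∫⁻ s in Ioi (0:ℝ), ENNReal.ofReal (c s ω * Y s ω)) ∂μ =
      ENNReal.ofReal x) :
    Tendsto (fun t => ∫ ω, N t ω ∂μ) atTop (𝓝 0) ∧
    (∀ t, 0 ≤ t →
      M t =ᵐ[μ] μ[fun ω => ∫ s in Ioi (0:ℝ), c s ω * Y s ω | ℱ t]) ∧
    UniformIntegrable (fun (t : ↥(Ici (0:ℝ))) => M t) 1 μ ∧
    (∀ t, 0 ≤ t →
      N t =ᵐ[μ] μ[fun ω => ∫ s in Ioi t, c s ω * Y s ω | ℱ t]) := by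
  classical
  -- the globally (jointly) measurable version of `c * Y`, extended by `0` on `s ≤ 0`.
  set G : ℝ × Ω → ℝ := fun p => if 0 < p.1 then c p.1 p.2 * Y p.1 p.2 else 0 with hGdef
  have hGnn : ∀ p, 0 ≤ G p := by
    intro p
    simp only [hGdef]
    split
    · exact mul_nonneg (hcnonneg _ _) (hYnonneg _ _)
    · exact le_rfl
  -- clamped measurability
  have hclamp : ∀ t : ℝ, ∀ m' : MeasurableSpace Ω, ℱ t ≤ m' →
      StronglyMeasurable[Real.measurableSpace.prod m']
        (fun p : ℝ × Ω => c (min p.1 t) p.2 * Y (min p.1 t) p.2) := by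
    intro t m' hm'
    have hmap : @Measurable (ℝ × Ω) (↥(Iic t) × Ω) (Real.measurableSpace.prod m')
        (Subtype.instMeasurableSpace.prod (ℱ t))
        (fun p => (⟨min p.1 t, Set.mem_Iic.mpr (min_le_right _ _)⟩, p.2)) := by
      refine Measurable.prodMk ?_ ?_
      · have h1 : @Measurable (ℝ × Ω) ℝ (Real.measurableSpace.prod m') _
            (fun p => min p.1 t) := measurable_fst.min measurable_const
        exact h1.subtype_mk
      · exact (measurable_id'' hm').comp measurable_snd
    have hc' := ((hcprog t).comp_measurable hmap)
    have hY' := ((hYprog t).comp_measurable hmap)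
    exact hc'.mul hY'
  have hGmeas : Measurable G := by
    have hGn_meas : ∀ n : ℕ, Measurable ((Ioc (0:ℝ) (n:ℝ) ×ˢ (univ : Set Ω)).indicator
        fun p : ℝ × Ω => c (min p.1 (n:ℝ)) p.2 * Y (min p.1 (n:ℝ)) p.2) := by
      intro n
      exact ((hclamp (n:ℝ) mΩ (ℱ.le _)).measurable).indicator
        (measurableSet_Ioc.prod MeasurableSet.univ)
    apply measurable_of_tendsto_metrizable' atTop hGn_meas
    rw [tendsto_pi_nhds]
    intro p
    apply tendsto_const_nhds.congr'
    by_cases h : 0 < p.1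
    · obtain ⟨n₀, hn₀⟩ := exists_nat_ge p.1
      filter_upwards [eventually_ge_atTop n₀] with n hn
      have hp : p ∈ Ioc (0:ℝ) (n:ℝ) ×ˢ (univ : Set Ω) := by
        refine ⟨⟨h, hn₀.trans ?_⟩, mem_univ _⟩
        exact_mod_cast hn
      rw [indicator_of_mem hp]
      have hmin : min p.1 (n:ℝ) = p.1 := min_eq_left hp.1.2
      simp only [hGdef, if_pos h, hmin]
    · filter_upwards with n
      have hp : p ∉ Ioc (0:ℝ) (n:ℝ) ×ˢ (univ : Set Ω) := by
        intro hp; exact h hp.1.1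
      rw [indicator_of_notMem hp]
      simp only [hGdef, if_neg h]
  have hGsm : ∀ ω, Measurable fun s => G (s, ω) :=
    fun ω => hGmeas.comp (measurable_id.prodMk measurable_const)
  -- the ℝ≥0∞-valued total consumption
  set g : Ω → ℝ≥0∞ := fun ω => ∫⁻ s, ENNReal.ofReal (G (s, ω)) with hgdef
  have hg_meas : Measurable g :=
    (ENNReal.measurable_ofReal.comp hGmeas).lintegral_prod_left'
  have hg_eq' : ∀ ω, g ω = ∫⁻ s in Ioi (0:ℝ), ENNReal.ofReal (G (s, ω)) := by
    intro ω
    have h0 : g ω = ∫⁻ s, ENNReal.ofReal (G (s, ω)) := rfl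
    rw [h0, ← lintegral_indicator measurableSet_Ioi]
    refine lintegral_congr fun s => ?_
    by_cases h : 0 < s
    · simp [indicator, mem_Ioi, h]
    · simp [indicator, mem_Ioi, h, hGdef]
  have hgint : ∫⁻ ω, g ω ∂μ = ENNReal.ofReal x := by
    rw [← htotal]
    apply lintegral_congr
    intro ω
    rw [hg_eq' ω]
    apply setLIntegral_congr_fun measurableSet_Ioi
    exact fun s hs => by simp only [hGdef]; rw [if_pos (mem_Ioi.mp hs)]
  have hg_fin : ∀ᵐ ω ∂μ, g ω < ⊤ :=
    ae_lt_top hg_meas (by rw [hgint]; exact ENNReal.ofReal_ne_top)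
  have hGint : ∀ᵐ ω ∂μ, Integrable (fun s => G (s, ω)) := by
    filter_upwards [hg_fin] with ω hω
    refine ⟨(hGsm ω).aestronglyMeasurable, ?_⟩
    rw [hasFiniteIntegral_iff_norm]
    have h2 : (∫⁻ s, ENNReal.ofReal ‖G (s, ω)‖) = g ω := by
      refine lintegral_congr fun s => ?_
      rw [Real.norm_of_nonneg (hGnn _)]
    exact h2.le.trans_lt hω
  -- the real-valued processes
  set gI : Ω → ℝ := fun ω => ∫ s, G (s, ω) with hgIdef
  set I : ℝ → Ω → ℝ := fun t ω => ∫ s in Ioc (0:ℝ) t, G (s, ω) with hIdef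
  set R : ℝ → Ω → ℝ := fun t ω => ∫ s in Ioi t, G (s, ω) with hRdef
  have hIcY : ∀ t ω, (∫ s in Ioc (0:ℝ) t, c s ω * Y s ω) = I t ω := by
    intro t ω
    exact setIntegral_congr_fun measurableSet_Ioc fun s hs => by
      simp only [hGdef]; rw [if_pos hs.1]
  have hRcY : ∀ t, 0 ≤ t → ∀ ω, (∫ s in Ioi t, c s ω * Y s ω) = R t ω := by
    intro t ht ω
    exact setIntegral_congr_fun measurableSet_Ioi fun s hs => by
      simp only [hGdef]; rw [if_pos (ht.trans_lt (mem_Ioi.mp hs))]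
  have hgIIoi : ∀ ω, gI ω = ∫ s in Ioi (0:ℝ), G (s, ω) := by
    intro ω
    have h0 : gI ω = ∫ s, G (s, ω) := rfl
    rw [h0, ← integral_indicator measurableSet_Ioi]
    congr 1
    funext s
    by_cases h : 0 < s
    · simp [indicator, mem_Ioi, h]
    · simp [indicator, mem_Ioi, h, hGdef]
  have hgIcY : ∀ ω, (∫ s in Ioi (0:ℝ), c s ω * Y s ω) = gI ω := by
    intro ω
    rw [hgIIoi ω]
    exact setIntegral_congr_fun measurableSet_Ioi fun s hs => by
      simp only [hGdef]; rw [if_pos (mem_Ioi.mp hs)]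
  have hgInn : ∀ ω, 0 ≤ gI ω := fun ω => integral_nonneg fun s => hGnn _
  have hInn : ∀ t ω, 0 ≤ I t ω := fun t ω => setIntegral_nonneg measurableSet_Ioc fun s _ => hGnn _
  have hRnn : ∀ t ω, 0 ≤ R t ω := fun t ω => setIntegral_nonneg measurableSet_Ioi fun s _ => hGnn _
  -- integrability of gI and its integral
  have hgIsm : AEStronglyMeasurable gI μ :=
    (hGmeas.stronglyMeasurable.integral_prod_left').aestronglyMeasurable
  have hofReal_gI : ∀ᵐ ω ∂μ, ENNReal.ofReal (gI ω) = g ω := by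
    filter_upwards [hGint] with ω hω
    exact ofReal_integral_eq_lintegral_ofReal hω (Eventually.of_forall fun s => hGnn _)
  have hgIint : Integrable gI μ := by
    refine ⟨hgIsm, ?_⟩
    rw [hasFiniteIntegral_iff_norm]
    calc ∫⁻ ω, ENNReal.ofReal ‖gI ω‖ ∂μ = ∫⁻ ω, g ω ∂μ := by
          apply lintegral_congr_ae
          filter_upwards [hofReal_gI] with ω hω
          rw [Real.norm_of_nonneg (hgInn ω), hω]
      _ < ⊤ := by rw [hgint]; exact ENNReal.ofReal_lt_top
  have hgItot : ∫ ω, gI ω ∂μ = x := by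
    rw [integral_eq_lintegral_of_nonneg_ae (Eventually.of_forall hgInn) hgIsm,
      lintegral_congr_ae hofReal_gI, hgint, ENNReal.toReal_ofReal hx.le]
  -- I t : bounds, measurability, integrability
  have hIle : ∀ t, ∀ᵐ ω ∂μ, I t ω ≤ gI ω := by
    intro t
    filter_upwards [hGint] with ω hω
    exact setIntegral_le_integral hω (Eventually.of_forall fun s => hGnn _)
  have hIsm : ∀ t : ℝ, StronglyMeasurable[ℱ t] (I t) := by
    intro t
    have hK := hclamp t (ℱ t) le_rfl
    have hKsm : StronglyMeasurable[Real.measurableSpace.prod (ℱ t)]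
        ((Ioc (0:ℝ) t ×ˢ (univ : Set Ω)).indicator
          fun p : ℝ × Ω => c (min p.1 t) p.2 * Y (min p.1 t) p.2) :=
      hK.indicator (measurableSet_Ioc.prod MeasurableSet.univ)
    have hint : StronglyMeasurable[ℱ t] fun ω => ∫ s,
        ((Ioc (0:ℝ) t ×ˢ (univ : Set Ω)).indicator
          fun p : ℝ × Ω => c (min p.1 t) p.2 * Y (min p.1 t) p.2) (s, ω) :=
      aux_intProdLeft hKsm volume
    have heq : I t = fun ω => ∫ s,
        ((Ioc (0:ℝ) t ×ˢ (univ : Set Ω)).indicator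
          fun p : ℝ × Ω => c (min p.1 t) p.2 * Y (min p.1 t) p.2) (s, ω) := by
      funext ω
      have h1 : (fun s => ((Ioc (0:ℝ) t ×ˢ (univ : Set Ω)).indicator
          (fun p : ℝ × Ω => c (min p.1 t) p.2 * Y (min p.1 t) p.2)) (s, ω)) =
          (Ioc (0:ℝ) t).indicator (fun s => c (min s t) ω * Y (min s t) ω) := by
        funext s
        by_cases h : s ∈ Ioc (0:ℝ) t <;> simp [indicator, h]
      rw [hIdef, h1, integral_indicator measurableSet_Ioc]
      exact setIntegral_congr_fun measurableSet_Ioc fun s hs =>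
        by simp [hGdef, hs.1, min_eq_left hs.2]
    rw [heq]
    exact hint
  have hIaesm : ∀ t, AEStronglyMeasurable (I t) μ :=
    fun t => ((hIsm t).mono (ℱ.le t)).aestronglyMeasurable
  have hIint : ∀ t, Integrable (I t) μ := by
    intro t
    refine hgIint.mono (hIaesm t) ?_
    filter_upwards [hIle t] with ω h
    rw [Real.norm_of_nonneg (hInn t ω), Real.norm_of_nonneg (hgInn ω)]
    exact h
  -- splitting
  have hsplit : ∀ t, 0 ≤ t → ∀ᵐ ω ∂μ, gI ω = I t ω + R t ω := by
    intro t ht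
    filter_upwards [hGint] with ω hω
    rw [hgIIoi ω, ← Ioc_union_Ioi_eq_Ioi ht,
      setIntegral_union (Ioc_disjoint_Ioi le_rfl) measurableSet_Ioi
        hω.integrableOn hω.integrableOn]
  have hRae : ∀ t, 0 ≤ t → R t =ᵐ[μ] fun ω => gI ω - I t ω := by
    intro t ht
    filter_upwards [hsplit t ht] with ω h
    rw [h]; ring
  have hRint : ∀ t, 0 ≤ t → Integrable (R t) μ := fun t ht =>
    (hgIint.sub (hIint t)).congr (hRae t ht).symm
  -- relation to N and M
  have hNeq : ∀ t ω, N t ω = M t ω - I t ω := fun t ω => by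
    rw [hM t ω, hIcY t ω]; ring
  have hNint : ∀ t, 0 ≤ t → Integrable (N t) μ := by
    intro t ht
    have : N t = fun ω => M t ω - I t ω := funext fun ω => hNeq t ω
    rw [this]; exact (hMint t ht).sub (hIint t)
  -- expectation of M
  have hEM : ∀ t, 0 ≤ t → ∫ ω, M t ω ∂μ = x := by
    intro t ht
    have h0 := hmart 0 t le_rfl ht
    have h1 : ∫ ω, (μ[M t|ℱ 0]) ω ∂μ = ∫ ω, M t ω ∂μ := integral_condExp (ℱ.le 0)
    rw [← h1, integral_congr_ae (h0.trans hM0)]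
    simp
  -- B and L
  set B : ℝ → ℝ := fun t => ∫ ω, I t ω ∂μ with hBdef
  set L : ℝ → ℝ≥0∞ := fun t => ∫⁻ ω, ENNReal.ofReal (I t ω) ∂μ with hLdef
  have hBL : ∀ t, ENNReal.ofReal (B t) = L t := fun t =>
    ofReal_integral_eq_lintegral_ofReal (hIint t) (Eventually.of_forall (hInn t))
  have hIlin : ∀ t, ∀ᵐ ω ∂μ,
      ENNReal.ofReal (I t ω) = ∫⁻ s in Ioc (0:ℝ) t, ENNReal.ofReal (G (s, ω)) := by
    intro t
    filter_upwards [hGint] with ω hω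
    exact ofReal_integral_eq_lintegral_ofReal hω.integrableOn
      (Eventually.of_forall fun s => hGnn _)
  have hLmono : Monotone L := by
    intro s t hst
    refine lintegral_mono_ae ?_
    filter_upwards [hIlin s, hIlin t] with ω h1 h2
    rw [h1, h2]
    exact lintegral_mono_set (Ioc_subset_Ioc_right hst)
  have hLle : ∀ t, L t ≤ ENNReal.ofReal x := by
    intro t
    rw [← hgint]
    refine lintegral_mono_ae ?_
    filter_upwards [hIlin t] with ω h1
    rw [h1, hg_eq' ω]
    exact lintegral_mono_set fun s hs => hs.1
  -- the ℕ-supremum of L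
  have hfn_sup : ∀ ω, (⨆ n : ℕ, ∫⁻ s in Ioc (0:ℝ) (n:ℝ), ENNReal.ofReal (G (s, ω))) = g ω := by
    intro ω
    have hmeas : ∀ n : ℕ, Measurable ((Ioc (0:ℝ) (n:ℝ)).indicator
        (fun s => ENNReal.ofReal (G (s, ω)))) := fun n =>
      (ENNReal.measurable_ofReal.comp (hGsm ω)).indicator measurableSet_Ioc
    have hmono : Monotone fun n : ℕ =>
        (Ioc (0:ℝ) (n:ℝ)).indicator (fun s => ENNReal.ofReal (G (s, ω))) := by
      intro a b hab
      exact indicator_le_indicator_of_subset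
        (Ioc_subset_Ioc_right (by exact_mod_cast hab)) (fun s => zero_le)
    calc (⨆ n : ℕ, ∫⁻ s in Ioc (0:ℝ) (n:ℝ), ENNReal.ofReal (G (s, ω)))
        = ⨆ n : ℕ, ∫⁻ s, (Ioc (0:ℝ) (n:ℝ)).indicator (fun s => ENNReal.ofReal (G (s, ω))) s := by
          refine iSup_congr fun n => ?_
          rw [lintegral_indicator measurableSet_Ioc]
      _ = ∫⁻ s, ⨆ n : ℕ, (Ioc (0:ℝ) (n:ℝ)).indicator (fun s => ENNReal.ofReal (G (s, ω))) s := by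
          rw [← lintegral_iSup hmeas hmono]
      _ = ∫⁻ s, ENNReal.ofReal (G (s, ω)) := by
          refine lintegral_congr fun s => ?_
          apply le_antisymm
          · exact iSup_le fun n => indicator_le_self _ _ s
          · by_cases h : 0 < s
            · obtain ⟨n, hn⟩ := exists_nat_ge s
              refine le_trans (le_of_eq ?_) (le_iSup (fun n : ℕ =>
                (Ioc (0:ℝ) (n:ℝ)).indicator (fun s => ENNReal.ofReal (G (s, ω))) s) n)
              rw [indicator_of_mem (mem_Ioc.mpr ⟨h, hn⟩)
                (fun s => ENNReal.ofReal (G (s, ω)))]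
            · simp [hGdef, h]
      _ = g ω := rfl
  have hfn_meas : ∀ n : ℕ, Measurable fun ω =>
      ∫⁻ s in Ioc (0:ℝ) (n:ℝ), ENNReal.ofReal (G (s, ω)) := by
    intro n
    have heq : ∀ ω, (∫⁻ s in Ioc (0:ℝ) (n:ℝ), ENNReal.ofReal (G (s, ω))) =
        ∫⁻ s, ((Ioc (0:ℝ) (n:ℝ) ×ˢ (univ : Set Ω)).indicator
          fun p : ℝ × Ω => ENNReal.ofReal (G p)) (s, ω) := by
      intro ω
      rw [← lintegral_indicator measurableSet_Ioc]
      refine lintegral_congr fun s => ?_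
      by_cases h : s ∈ Ioc (0:ℝ) (n:ℝ) <;> simp [indicator, h]
    simp_rw [heq]
    exact ((ENNReal.measurable_ofReal.comp hGmeas).indicator
      (measurableSet_Ioc.prod MeasurableSet.univ)).lintegral_prod_left'
  have hLsupN : (⨆ n : ℕ, L ((n : ℕ) : ℝ)) = ENNReal.ofReal x := by
    have heq : ∀ n : ℕ, L ((n:ℕ):ℝ) =
        ∫⁻ ω, (∫⁻ s in Ioc (0:ℝ) ((n:ℕ):ℝ), ENNReal.ofReal (G (s, ω))) ∂μ := fun n =>
      lintegral_congr_ae (hIlin _)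
    have hmono2 : Monotone fun n : ℕ => fun ω =>
        ∫⁻ s in Ioc (0:ℝ) ((n:ℕ):ℝ), ENNReal.ofReal (G (s, ω)) := by
      intro a b hab
      intro ω
      exact lintegral_mono_set (Ioc_subset_Ioc_right (by exact_mod_cast hab))
    calc (⨆ n : ℕ, L ((n:ℕ):ℝ))
        = ⨆ n : ℕ, ∫⁻ ω, (∫⁻ s in Ioc (0:ℝ) ((n:ℕ):ℝ), ENNReal.ofReal (G (s, ω))) ∂μ := by
          exact iSup_congr heq
      _ = ∫⁻ ω, (⨆ n : ℕ, ∫⁻ s in Ioc (0:ℝ) ((n:ℕ):ℝ), ENNReal.ofReal (G (s, ω))) ∂μ := by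
          rw [← lintegral_iSup hfn_meas hmono2]
      _ = ∫⁻ ω, g ω ∂μ := lintegral_congr fun ω => hfn_sup ω
      _ = ENNReal.ofReal x := hgint
  have hLsup : (⨆ t : ℝ, L t) = ENNReal.ofReal x := by
    apply le_antisymm (iSup_le hLle)
    rw [← hLsupN]
    exact iSup_le fun n => le_iSup L ((n:ℕ):ℝ)
  have hLtend : Tendsto L atTop (𝓝 (ENNReal.ofReal x)) := hLsup ▸ tendsto_atTop_iSup hLmono
  have hBtend : Tendsto B atTop (𝓝 x) := by
    have h1 : Tendsto (fun t => (L t).toReal) atTop (𝓝 (ENNReal.ofReal x).toReal) :=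
      (ENNReal.tendsto_toReal ENNReal.ofReal_ne_top).comp hLtend
    rw [ENNReal.toReal_ofReal hx.le] at h1
    refine h1.congr fun t => ?_
    rw [← hBL t, ENNReal.toReal_ofReal (integral_nonneg (hInn t))]
  -- expectations of N and R
  have hEN : ∀ t, 0 ≤ t → ∫ ω, N t ω ∂μ = x - B t := by
    intro t ht
    have h2 : ∫ ω, N t ω ∂μ = ∫ ω, (M t ω - I t ω) ∂μ :=
      integral_congr_ae (Eventually.of_forall fun ω => hNeq t ω)
    rw [h2, integral_sub (hMint t ht) (hIint t), hEM t ht]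
  have hER : ∀ t, 0 ≤ t → ∫ ω, R t ω ∂μ = x - B t := by
    intro t ht
    rw [integral_congr_ae (hRae t ht), integral_sub hgIint (hIint t), hgItot]
  -- part (a)
  have parta : Tendsto (fun t => ∫ ω, N t ω ∂μ) atTop (𝓝 0) := by
    have h1 : Tendsto (fun t => x - B t) atTop (𝓝 0) := by
      have := hBtend.const_sub x
      simpa using this
    refine Tendsto.congr' ?_ h1
    filter_upwards [eventually_ge_atTop (0:ℝ)] with t ht
    exact (hEN t ht).symm
  -- part (b) key
  have keyb : ∀ t, 0 ≤ t → M t =ᵐ[μ] μ[gI|ℱ t] := by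
    intro t ht
    have hdiff_aesm : AEStronglyMeasurable (M t - μ[gI|ℱ t]) μ :=
      (hMint t ht).aestronglyMeasurable.sub
        (stronglyMeasurable_condExp.mono (ℱ.le t)).aestronglyMeasurable
    have hbound : ∀ n : ℕ, t ≤ (n:ℝ) → eLpNorm (M t - μ[gI|ℱ t]) 1 μ ≤
        ENNReal.ofReal (x - B (n:ℝ)) + ENNReal.ofReal (x - B (n:ℝ)) := by
      intro n hn
      have hMn := hMint (n:ℝ) (ht.trans hn)
      have h1 : M t - μ[gI|ℱ t] =ᵐ[μ] μ[M (n:ℝ) - gI|ℱ t] := by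
        have h2 := condExp_sub (μ := μ) (m := ℱ t) hMn hgIint
        refine EventuallyEq.trans ?_ h2.symm
        exact EventuallyEq.sub (hmart t (n:ℝ) ht hn).symm EventuallyEq.rfl
      calc eLpNorm (M t - μ[gI|ℱ t]) 1 μ
          = eLpNorm (μ[M (n:ℝ) - gI|ℱ t]) 1 μ := eLpNorm_congr_ae h1
        _ ≤ eLpNorm (M (n:ℝ) - gI) 1 μ := eLpNorm_one_condExp_le_eLpNorm _
        _ = ∫⁻ ω, ↑‖M (n:ℝ) ω - gI ω‖₊ ∂μ := by
            rw [eLpNorm_one_eq_lintegral_enorm]; rfl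
        _ ≤ ∫⁻ ω, (ENNReal.ofReal (N (n:ℝ) ω) + ENNReal.ofReal (R (n:ℝ) ω)) ∂μ := by
            refine lintegral_mono_ae ?_
            filter_upwards [hsplit (n:ℝ) (ht.trans hn), hNnonneg (n:ℝ) (ht.trans hn)]
              with ω hω hNω
            have hMg : M (n:ℝ) ω - gI ω = N (n:ℝ) ω - R (n:ℝ) ω := by
              rw [hNeq (n:ℝ) ω, hω]; ring
            rw [hMg, ← ENNReal.ofReal_add hNω (hRnn _ _)]
            rw [show ((‖N (n:ℝ) ω - R (n:ℝ) ω‖₊ : ℝ≥0∞)) =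
              ENNReal.ofReal ‖N (n:ℝ) ω - R (n:ℝ) ω‖ from
              (ofReal_norm (N (n:ℝ) ω - R (n:ℝ) ω)).symm]
            apply ENNReal.ofReal_le_ofReal
            calc ‖N (n:ℝ) ω - R (n:ℝ) ω‖ ≤ ‖N (n:ℝ) ω‖ + ‖R (n:ℝ) ω‖ := norm_sub_le _ _
              _ = N (n:ℝ) ω + R (n:ℝ) ω := by
                  rw [Real.norm_of_nonneg hNω, Real.norm_of_nonneg (hRnn _ _)]
        _ = ENNReal.ofReal (x - B (n:ℝ)) + ENNReal.ofReal (x - B (n:ℝ)) := by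
            rw [lintegral_add_left' ((hNint (n:ℝ) (ht.trans hn)).aemeasurable.ennreal_ofReal)]
            rw [← ofReal_integral_eq_lintegral_ofReal (hNint (n:ℝ) (ht.trans hn))
              (hNnonneg (n:ℝ) (ht.trans hn)),
              ← ofReal_integral_eq_lintegral_ofReal (hRint (n:ℝ) (ht.trans hn))
              (Eventually.of_forall (hRnn (n:ℝ))),
              hEN (n:ℝ) (ht.trans hn), hER (n:ℝ) (ht.trans hn)]
    have htend0 : Tendsto (fun n : ℕ => ENNReal.ofReal (x - B (n:ℝ)) +
        ENNReal.ofReal (x - B (n:ℝ))) atTop (𝓝 0) := by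
      have h1 : Tendsto (fun n : ℕ => x - B (n:ℝ)) atTop (𝓝 0) := by
        have := (hBtend.const_sub x).comp
          (tendsto_natCast_atTop_atTop : Tendsto (fun n : ℕ => (n:ℝ)) atTop atTop)
        simpa [Function.comp_def] using this
      have h2 : Tendsto (fun n : ℕ => ENNReal.ofReal (x - B (n:ℝ))) atTop (𝓝 0) := by
        have := ENNReal.tendsto_ofReal h1
        simpa using this
      simpa using h2.add h2
    have hzero : eLpNorm (M t - μ[gI|ℱ t]) 1 μ = 0 := by
      refine le_antisymm ?_ zero_le
      refine ge_of_tendsto htend0 ?_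
      obtain ⟨n₀, hn₀⟩ := exists_nat_ge t
      filter_upwards [eventually_ge_atTop n₀] with n hn
      exact hbound n (hn₀.trans (by exact_mod_cast hn))
    have := (eLpNorm_eq_zero_iff hdiff_aesm one_ne_zero).mp hzero
    filter_upwards [this] with ω hω
    have : M t ω - (μ[gI|ℱ t]) ω = 0 := hω
    linarith
  -- part (b)
  have partb : ∀ t, 0 ≤ t →
      M t =ᵐ[μ] μ[fun ω => ∫ s in Ioi (0:ℝ), c s ω * Y s ω|ℱ t] := by
    intro t ht
    have hfun : (fun ω => ∫ s in Ioi (0:ℝ), c s ω * Y s ω) = gI := funext hgIcY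
    rw [hfun]
    exact keyb t ht
  -- uniform integrability
  have partUI : UniformIntegrable (fun (t : ↥(Ici (0:ℝ))) => M t) 1 μ := by
    have hUI := hgIint.uniformIntegrable_condExp
      (fun t : ↥(Ici (0:ℝ)) => ℱ.le (t : ℝ))
    exact hUI.ae_eq fun t => (keyb (t : ℝ) t.2).symm
  -- part (c)
  have partc : ∀ t, 0 ≤ t →
      N t =ᵐ[μ] μ[fun ω => ∫ s in Ioi t, c s ω * Y s ω|ℱ t] := by
    intro t ht
    have hfun : (fun ω => ∫ s in Ioi t, c s ω * Y s ω) = R t := funext (hRcY t ht)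
    rw [hfun]
    have hIcond : μ[I t|ℱ t] = I t :=
      condExp_of_stronglyMeasurable (ℱ.le t) (hIsm t) (hIint t)
    calc N t =ᵐ[μ] (fun ω => M t ω - I t ω) := Eventually.of_forall fun ω => hNeq t ω
      _ =ᵐ[μ] (fun ω => (μ[gI|ℱ t]) ω - I t ω) := by
          filter_upwards [keyb t ht] with ω hω
          rw [hω]
      _ = μ[gI|ℱ t] - μ[I t|ℱ t] := by rw [hIcond]; rfl
      _ =ᵐ[μ] μ[gI - I t|ℱ t] := (condExp_sub hgIint (hIint t) (ℱ t)).symm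
      _ =ᵐ[μ] μ[R t|ℱ t] := condExp_congr_ae (hRae t ht).symm
  exact ⟨parta, partb, partUI, partc⟩
end
end
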